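/- arXiv:1412.8207 — 6 statements merged into one kernel-verified Lean document; each statement's English description precedes it below -/
import Mathlib

section
/- Let (Γ, μ) be a proper resistive network with Γ connected, let k, ℓ be vertices, and let v ∈ ℝ^{Vert(Γ)} satisfy Lv = e_k − e_ℓ. Then for every oriented edge e : i → j, the current (v_i − v_j)/μ(e) along e equals (Σ_{T ∈ T(Γ)} μ(Ed(Γ)∖T) · I_{Γ|_T}(e : i → j)) / (Σ_{T ∈ T(Γ)} μ(Ed(Γ)∖T)), where I_{Γ|_T}(e : i → j) is +1 if e belongs to T and the unique path in Γ|_T from k to ℓ traverses e from i to j, −1 if it traverses e from j to i, and 0 otherwise. In particular the current along every edge lies between −1 and 1. -/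
open Classical
open scoped BigOperators

/-- A graph: a finite set of vertices, a finite set of edges, and a map assigning to
each edge its unordered pair of endpoints (loops and parallel edges allowed). -/
structure ResGraph where
  V : Type
  E : Type
  [fintV : Fintype V]
  [decV : DecidableEq V]
  [fintE : Fintype E]
  [decE : DecidableEq E]
  ends : E → Sym2 V

attribute [instance] ResGraph.fintV ResGraph.decV ResGraph.fintE ResGraph.decE

namespace ResGraph

variable (G : ResGraph)

/-- The Laplacian of the resistive network `(G, μ)` applied to a voltage assignment `v`:
`(L v) i = Σ_j Σ_{edges e : i → j} (v i − v j) / μ e`. -/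
noncomputable def lap (μ : G.E → ℝ) (v : G.V → ℝ) : G.V → ℝ := fun i =>
  ∑ j : G.V, ∑ e : G.E, if G.ends e = s(i, j) then (v i - v j) / μ e else 0

/-- `i` and `j` are joined by an edge belonging to `F`. -/
def Adj (F : Set G.E) (i j : G.V) : Prop := ∃ e ∈ F, G.ends e = s(i, j)

/-- `i` and `j` lie in the same connected component of the subgraph `Γ|_F`
(the subgraph with all vertices of `Γ` and edge set `F`). -/
def Reach (F : Set G.E) (i j : G.V) : Prop := Relation.EqvGen (G.Adj F) i j

/-- The subgraph `Γ|_F` is connected. -/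
def ConnOn (F : Set G.E) : Prop := ∀ i j : G.V, G.Reach F i j

/-- The graph `G` is connected. -/
def Connected : Prop := G.ConnOn Set.univ

/-- The set of connected components of the subgraph `Γ|_F`. -/
def Comp (F : Set G.E) : Type := Quotient (Relation.EqvGen.setoid (G.Adj F))

/-- A walk from `i` to `j`: a finite sequence of vertices together with a choice of an
edge from each vertex to the next. -/
inductive Walk : G.V → G.V → Type
  | nil (i : G.V) : Walk i i
  | cons {i j k : G.V} (e : G.E) (he : G.ends e = s(i, j)) (w : Walk j k) : Walk i k

namespace Walk

variable {G}

/-- The list of vertices visited by a walk, in order (starting vertex first). -/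
def vertices : ∀ {i j : G.V}, G.Walk i j → List G.V
  | _, _, .nil a => [a]
  | _, _, @Walk.cons _ a _ _ _ _ w => a :: vertices w

/-- The list of edges traversed by a walk, in order. -/
def edges : ∀ {i j : G.V}, G.Walk i j → List G.E
  | _, _, .nil _ => []
  | _, _, .cons e _ w => e :: edges w

/-- The list of steps `(source, edge, target)` of a walk. -/
def steps : ∀ {i j : G.V}, G.Walk i j → List (G.V × G.E × G.V)
  | _, _, .nil _ => []
  | _, _, @Walk.cons _ a b _ e _ w => (a, e, b) :: steps w

/-- All edges of the walk lie in the edge set `F`. -/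
def In {i j : G.V} (w : G.Walk i j) (F : Set G.E) : Prop := ∀ e ∈ w.edges, e ∈ F

/-- A path: a walk all of whose vertices are distinct, except possibly the start and the
end vertex (and which does not traverse any edge twice). -/
def IsPath {i j : G.V} (w : G.Walk i j) : Prop :=
  w.vertices.dropLast.Nodup ∧ w.vertices.tail.Nodup ∧ w.edges.Nodup

/-- Change the (definitionally equal) endpoints of a walk. -/
def copy : ∀ {i j i' j' : G.V}, G.Walk i j → i = i' → j = j' → G.Walk i' j'
  | _, _, _, _, w, rfl, rfl => w

variable (G)

end Walk

/-- `F` is cycle-free: the subgraph `Γ|_F` contains no cycle, i.e. every closed path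
with edges in `F` is trivial. -/
def CycleFree (F : Set G.E) : Prop :=
  ∀ (i : G.V) (w : G.Walk i i), w.In F → w.IsPath → w.edges = []

/-- `T` is a spanning tree of `G`: the subgraph `Γ|_T` is connected and cycle-free. -/
def IsSpanningTree (T : Set G.E) : Prop := G.ConnOn T ∧ G.CycleFree T

/-- `F` is a 2-forest: `Γ|_F` is cycle-free with exactly two connected components. -/
def IsTwoForest (F : Set G.E) : Prop := G.CycleFree F ∧ Nat.card (G.Comp F) = 2

/-- `M` is a maximal forest of the subgraph `Γ|_S`: it is a cycle-free subset of `S`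
containing a spanning tree of each connected component of `Γ|_S` (equivalently,
inducing the same connected components as `S`). -/
def IsMaxForestOf (M S : Set G.E) : Prop :=
  M ⊆ S ∧ G.CycleFree M ∧ ∀ i j : G.V, G.Reach S i j ↔ G.Reach M i j

/-- The sign `σ(i,j;k,ℓ;F)` attached to a 2-forest `F`: `+1` if one component of `Γ|_F`
contains `i` and `k` and the other contains `j` and `ℓ`; `-1` if one component contains
`i` and `ℓ` and the other contains `j` and `k`; `0` otherwise. -/
noncomputable def sigma2 (F : Set G.E) (i j k l : G.V) : ℝ :=
  if ¬ G.Reach F i j ∧ G.Reach F i k ∧ G.Reach F j l then 1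
  else if ¬ G.Reach F i j ∧ G.Reach F i l ∧ G.Reach F j k then -1
  else 0

end ResGraph

namespace ResGraph

variable (G : ResGraph)

/-- An oriented edge: an edge together with an ordering of its endpoints. -/
def OEdge : Type := {x : G.E × G.V × G.V // G.ends x.1 = s(x.2.1, x.2.2)}

noncomputable instance : Fintype G.OEdge := Subtype.fintype _

namespace OEdge

variable {G}

/-- The underlying edge of an oriented edge. -/
def edge (o : G.OEdge) : G.E := o.1.1

/-- The source of an oriented edge. -/
def src (o : G.OEdge) : G.V := o.1.2.1

/-- The target of an oriented edge. -/
def tgt (o : G.OEdge) : G.V := o.1.2.2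

/-- The reversal of an oriented edge. -/
def rev (o : G.OEdge) : G.OEdge := ⟨(o.1.1, o.1.2.2, o.1.2.1), o.2.trans Sym2.eq_swap⟩

end OEdge

/-- An edge current assignment: a real-valued function on oriented edges with
`I(e : i → j) = −I(e : j → i)`. -/
def IsCurrent (I : G.OEdge → ℝ) : Prop := ∀ o : G.OEdge, I o.rev = - I o

/-- The edge current assignment `I` is consistent with the vertex current assignment `D`:
for every vertex `i`, `Σ_j Σ_{edges e : i → j} I(e : i → j) = D i`. -/
def Consistent (I : G.OEdge → ℝ) (D : G.V → ℝ) : Prop :=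
  ∀ x : G.V, (∑ o ∈ Finset.univ.filter (fun o : G.OEdge => o.src = x), I o) = D x

lemma exists_oedge (e : G.E) : ∃ o : G.OEdge, o.edge = e := by
  have h : ∀ z : Sym2 G.V, G.ends e = z → ∃ o : G.OEdge, o.edge = e := by
    refine Sym2.ind (fun a b h => ?_)
    exact ⟨⟨(e, a, b), h⟩, rfl⟩
  exact h (G.ends e) rfl

/-- A choice of orientation for each edge. -/
noncomputable def orient (e : G.E) : G.OEdge := Classical.choose (G.exists_oedge e)

lemma orient_edge (e : G.E) : (G.orient e).edge = e := Classical.choose_spec (G.exists_oedge e)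

/-- The power dissipated by an edge current assignment: `Σ_{e ∈ Ed(Γ)} μ(e) I(e)²`. -/
noncomputable def power (μ : G.E → ℝ) (I : G.OEdge → ℝ) : ℝ :=
  ∑ e : G.E, μ e * (I (G.orient e)) ^ 2

/-- The Green's function `g(Γ, μ; D, E) = Dᵀ v` for any `v` with `L v = E`
(for `Γ` connected, `μ` proper, and `D`, `E` zero-sum vectors, such a `v` exists and
`Dᵀ v` does not depend on the choice). -/
noncomputable def green (μ : G.E → ℝ) (D E : G.V → ℝ) : ℝ :=
  if h : ∃ v : G.V → ℝ, G.lap μ v = E then ∑ x : G.V, D x * Classical.choose h x else 0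

/-- The contracted graph `Γ/S`: identify the two endpoints of each edge in `S` and
delete the edges in `S`. -/
noncomputable def contract (S : Set G.E) : ResGraph :=
  letI : DecidableEq (Quotient (Relation.EqvGen.setoid (G.Adj S))) := Classical.decEq _
  letI : DecidablePred (· ∈ S) := Classical.decPred _
  { V := Quotient (Relation.EqvGen.setoid (G.Adj S))
    E := {e : G.E // e ∉ S}
    ends := fun e => (G.ends e.1).map (Quotient.mk (Relation.EqvGen.setoid (G.Adj S))) }

/-- The quotient map `[·] : Vert(Γ) → Vert(Γ/S)`. -/
noncomputable def cmk (S : Set G.E) (x : G.V) : (G.contract S).V :=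
  Quotient.mk (Relation.EqvGen.setoid (G.Adj S)) x

/-- The edge of `Γ` underlying an edge of `Γ/S` (recall `Ed(Γ/S) = Ed(Γ)∖S`). -/
noncomputable def cval (S : Set G.E) (e : (G.contract S).E) : G.E := e.1

/-- The subset of `Ed(Γ/S) = Ed(Γ)∖S` induced by a subset `F ⊆ Ed(Γ)`, namely `F∖S`. -/
noncomputable def cset (S : Set G.E) (F : Set G.E) : Set (G.contract S).E :=
  {e : (G.contract S).E | G.cval S e ∈ F}

/-- The linear map `[·] : ℝ^{Vert(Γ)} → ℝ^{Vert(Γ/S)}` sending the basis vector `e_i`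
to `e_{[i]}`. -/
noncomputable def pushVec (S : Set G.E) (D : G.V → ℝ) : (G.contract S).V → ℝ := fun x =>
  ∑ i ∈ Finset.univ.filter (fun i : G.V => G.cmk S i = x), D i

/-- Contraction of walks: delete from a walk in `Γ` the edges belonging to `S`,
obtaining a walk in `Γ/S`. -/
noncomputable def contractWalk (S : Set G.E) :
    ∀ {i j : G.V}, G.Walk i j → (G.contract S).Walk (G.cmk S i) (G.cmk S j)
  | _, _, .nil a => .nil (G.cmk S a)
  | _, _, @Walk.cons _ a b _ e he w =>
    if hS : e ∈ S then
      (contractWalk S w).copy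
        (Quotient.sound (Relation.EqvGen.rel b a ⟨e, hS, he.trans Sym2.eq_swap⟩)) rfl
    else
      Walk.cons (j := G.cmk S b) ⟨e, hS⟩
        (by show Sym2.map _ (G.ends e) = s(G.cmk S a, G.cmk S b)
            rw [he]
            exact Sym2.map_pair_eq _ a b) (contractWalk S w)

/-- The current `I_{Γ|_T}(e : i → j)` flowing along the oriented edge `e : i → j` when a
unit current from `k` to `ℓ` is imposed on the spanning tree `Γ|_T`: it is `+1` if `e ∈ T`
and the unique path in `Γ|_T` from `k` to `ℓ` traverses `e` from `i` to `j`, `−1` if it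
traverses `e` from `j` to `i`, and `0` otherwise. -/
noncomputable def treeCurrent (T : Set G.E) (k l : G.V) (e : G.E) (i j : G.V) : ℝ :=
  if e ∈ T ∧ ∃ w : G.Walk k l, w.IsPath ∧ w.In T ∧ (i, e, j) ∈ w.steps then 1
  else if e ∈ T ∧ ∃ w : G.Walk k l, w.IsPath ∧ w.In T ∧ (j, e, i) ∈ w.steps then -1
  else 0

/-- The extended Green's function on possibly improper resistances: contract the edges of
zero resistance and take the Green's function of the resulting proper network, with the
pushed-forward vertex vectors. -/
noncomputable def egreen (μ : G.E → ℝ) (D E : G.V → ℝ) : ℝ :=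
  (G.contract {e : G.E | μ e = 0}).green (fun e => μ (G.cval {e : G.E | μ e = 0} e))
    (G.pushVec {e : G.E | μ e = 0} D) (G.pushVec {e : G.E | μ e = 0} E)

end ResGraph


-- ===================== Auxiliary development =====================

namespace ResGraph

variable {G : ResGraph}

namespace Walk

@[simp] lemma vertices_nil (a : G.V) : (Walk.nil a).vertices = [a] := rfl
@[simp] lemma vertices_cons {a b c : G.V} (e : G.E) (he : G.ends e = s(a, b)) (w : G.Walk b c) :
    (Walk.cons e he w).vertices = a :: w.vertices := rfl
@[simp] lemma edges_nil (a : G.V) : (Walk.nil a).edges = [] := rfl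
@[simp] lemma edges_cons {a b c : G.V} (e : G.E) (he : G.ends e = s(a, b)) (w : G.Walk b c) :
    (Walk.cons e he w).edges = e :: w.edges := rfl
@[simp] lemma steps_nil (a : G.V) : (Walk.nil a).steps = [] := rfl
@[simp] lemma steps_cons {a b c : G.V} (e : G.E) (he : G.ends e = s(a, b)) (w : G.Walk b c) :
    (Walk.cons e he w).steps = (a, e, b) :: w.steps := rfl

lemma vertices_head : ∀ {a b : G.V} (w : G.Walk a b), w.vertices = a :: w.vertices.tail
  | _, _, .nil a => rfl
  | _, _, .cons e he w => rfl

lemma vertices_ne_nil {a b : G.V} (w : G.Walk a b) : w.vertices ≠ [] := by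
  rw [w.vertices_head]; simp

lemma vertices_concat : ∀ {a b : G.V} (w : G.Walk a b), ∃ t, w.vertices = t ++ [b]
  | _, _, .nil a => ⟨[], rfl⟩
  | _, _, @Walk.cons _ a b c e he w => by
      obtain ⟨t, ht⟩ := vertices_concat w
      exact ⟨a :: t, by simp [ht]⟩

/-- Concatenation of walks. -/
def append : ∀ {a b c : G.V}, G.Walk a b → G.Walk b c → G.Walk a c
  | _, _, _, .nil _, w' => w'
  | _, _, _, .cons e he w, w' => .cons e he (append w w')

@[simp] lemma append_nil_left {a c : G.V} (w' : G.Walk a c) : (Walk.nil a).append w' = w' := rfl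
@[simp] lemma append_cons {a b b' c : G.V} (e : G.E) (he : G.ends e = s(a, b))
    (w : G.Walk b b') (w' : G.Walk b' c) :
    (Walk.cons e he w).append w' = Walk.cons e he (w.append w') := rfl

lemma edges_append : ∀ {a b c : G.V} (w : G.Walk a b) (w' : G.Walk b c),
    (w.append w').edges = w.edges ++ w'.edges
  | _, _, _, .nil _, w' => rfl
  | _, _, _, .cons e he w, w' => by simp [edges_append w w']

lemma steps_append : ∀ {a b c : G.V} (w : G.Walk a b) (w' : G.Walk b c),
    (w.append w').steps = w.steps ++ w'.steps
  | _, _, _, .nil _, w' => rfl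
  | _, _, _, .cons e he w, w' => by simp [steps_append w w']

lemma vertices_append : ∀ {a b c : G.V} (w : G.Walk a b) (w' : G.Walk b c),
    (w.append w').vertices = w.vertices ++ w'.vertices.tail
  | _, _, _, .nil _, w' => (vertices_head w').symm ▸ rfl
  | _, _, _, .cons e he w, w' => by simp [vertices_append w w']

lemma steps_ends : ∀ {a b p q : G.V} {e : G.E} (w : G.Walk a b),
    (p, e, q) ∈ w.steps → G.ends e = s(p, q)
  | _, _, p, q, e, .nil _, h => by simp at h
  | _, _, p, q, e, .cons f hf w, h => by
      rcases List.mem_cons.1 h with h | h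
      · simp only [Prod.mk.injEq] at h
        obtain ⟨rfl, rfl, rfl⟩ := h
        exact hf
      · exact steps_ends w h

lemma steps_map_edge : ∀ {a b : G.V} (w : G.Walk a b),
    w.steps.map (fun s => s.2.1) = w.edges
  | _, _, .nil _ => rfl
  | _, _, .cons e he w => by simp [steps_map_edge w]

lemma mem_edges_iff_steps {a b : G.V} (w : G.Walk a b) {e : G.E} :
    e ∈ w.edges ↔ ∃ p q, (p, e, q) ∈ w.steps := by
  rw [← w.steps_map_edge, List.mem_map]
  constructor
  · rintro ⟨⟨p, f, q⟩, hm, rfl⟩; exact ⟨p, q, hm⟩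
  · rintro ⟨p, q, hm⟩; exact ⟨(p, e, q), hm, rfl⟩

lemma steps_nodup {a b : G.V} (w : G.Walk a b) (h : w.edges.Nodup) : w.steps.Nodup := by
  rw [← w.steps_map_edge] at h; exact h.of_map _

lemma steps_eq_of_edge_eq {a b : G.V} (w : G.Walk a b) (h : w.edges.Nodup)
    {p q p' q' : G.V} {e : G.E} (h1 : (p, e, q) ∈ w.steps) (h2 : (p', e, q') ∈ w.steps) :
    p = p' ∧ q = q' := by
  rw [← w.steps_map_edge] at h
  have := List.inj_on_of_nodup_map h h1 h2 rfl
  simp only [Prod.mk.injEq] at this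
  exact ⟨this.1, this.2.2⟩

lemma mem_vertices_of_steps : ∀ {a b p q : G.V} {e : G.E} (w : G.Walk a b),
    (p, e, q) ∈ w.steps → p ∈ w.vertices ∧ q ∈ w.vertices
  | _, _, p, q, e, .nil _, h => by simp at h
  | _, _, p, q, e, .cons f hf w, h => by
      rcases List.mem_cons.1 h with h | h
      · simp only [Prod.mk.injEq] at h
        obtain ⟨rfl, rfl, rfl⟩ := h
        refine ⟨by simp, ?_⟩
        rw [vertices_cons, w.vertices_head]
        simp
      · have := mem_vertices_of_steps w h
        simp [this.1, this.2]

lemma mem_edges_of_steps {a b p q : G.V} {e : G.E} (w : G.Walk a b)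
    (h : (p, e, q) ∈ w.steps) : e ∈ w.edges :=
  (mem_edges_iff_steps w).2 ⟨p, q, h⟩

@[simp] lemma In_nil {a : G.V} {F : Set G.E} : (Walk.nil a).In F := by
  intro e he; simp at he

lemma In_cons {a b c : G.V} {e : G.E} {he : G.ends e = s(a, b)} {w : G.Walk b c}
    {F : Set G.E} : (Walk.cons e he w).In F ↔ e ∈ F ∧ w.In F := by
  constructor
  · intro h; exact ⟨h e (by simp), fun f hf => h f (by simp [hf])⟩
  · rintro ⟨h1, h2⟩ f hf
    rcases List.mem_cons.1 hf with rfl | hf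
    · exact h1
    · exact h2 f hf

lemma In.mono {a b : G.V} {w : G.Walk a b} {F F' : Set G.E} (h : w.In F) (hFF : F ⊆ F') :
    w.In F' := fun e he => hFF (h e he)

lemma exists_suffix : ∀ {a b x : G.V} (w : G.Walk a b), x ∈ w.vertices →
    ∃ w₂ : G.Walk x b, (∀ e ∈ w₂.edges, e ∈ w.edges) ∧ w₂.vertices <:+ w.vertices
  | _, _, x, .nil a, hx => by
      simp at hx; subst hx
      exact ⟨.nil x, by simp, List.suffix_refl _⟩
  | _, _, x, @Walk.cons _ a c b e he w, hx => by
      by_cases hxa : x = a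
      · subst hxa
        exact ⟨.cons e he w, fun f hf => hf, List.suffix_refl _⟩
      · have hx' : x ∈ w.vertices := by
          rcases List.mem_cons.1 hx with h | h
          · exact absurd h hxa
          · exact h
        obtain ⟨w₂, hsub, hsuf⟩ := exists_suffix w hx'
        exact ⟨w₂, fun f hf => by simp [hsub f hf], hsuf.trans (List.suffix_cons a _)⟩

lemma exists_nodup : ∀ {a b : G.V} (w : G.Walk a b),
    ∃ p : G.Walk a b, (∀ e ∈ p.edges, e ∈ w.edges) ∧ p.vertices.Nodup
  | _, _, .nil a => ⟨.nil a, by simp, by simp⟩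
  | _, _, @Walk.cons _ a c b e he w => by
      obtain ⟨p, hsub, hnd⟩ := exists_nodup w
      by_cases hx : a ∈ p.vertices
      · obtain ⟨w₂, hsub₂, hsuf⟩ := exists_suffix p hx
        exact ⟨w₂, fun f hf => by simp [hsub f (hsub₂ f hf)],
          hnd.sublist hsuf.sublist⟩
      · exact ⟨.cons e he p, by
          intro f hf
          rcases List.mem_cons.1 hf with rfl | hf
          · simp
          · simp [hsub f hf], by simp [hx, hnd]⟩

lemma edges_nodup_of_vertices_nodup : ∀ {a b : G.V} (w : G.Walk a b),
    w.vertices.Nodup → w.edges.Nodup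
  | _, _, .nil _, _ => by simp
  | _, _, @Walk.cons _ a c b e he w, hnd => by
      rw [vertices_cons, List.nodup_cons] at hnd
      rw [edges_cons, List.nodup_cons]
      refine ⟨?_, edges_nodup_of_vertices_nodup w hnd.2⟩
      intro hmem
      obtain ⟨p, q, hpq⟩ := (mem_edges_iff_steps w).1 hmem
      have hends := steps_ends w hpq
      have hmemv := mem_vertices_of_steps w hpq
      rw [he] at hends
      rcases Sym2.eq_iff.1 hends.symm with ⟨h1, h2⟩ | ⟨h1, h2⟩
      · exact hnd.1 (h1 ▸ hmemv.1)
      · exact hnd.1 (h2 ▸ hmemv.2)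

lemma isPath_of_nodup {a b : G.V} (w : G.Walk a b) (h : w.vertices.Nodup) : w.IsPath :=
  ⟨h.sublist (List.dropLast_sublist _), h.sublist (List.tail_sublist _),
    edges_nodup_of_vertices_nodup w h⟩

lemma steps_eq_nil_of_edges {a b : G.V} (w : G.Walk a b) (h : w.edges = []) :
    w.steps = [] := by
  cases w with
  | nil => rfl
  | cons e he w => simp at h

/-- Reversal of a walk. -/
def reverse : ∀ {a b : G.V}, G.Walk a b → G.Walk b a
  | _, _, .nil a => .nil a
  | _, _, .cons e he w => (reverse w).append (.cons e (he.trans Sym2.eq_swap) (.nil _))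

lemma mem_edges_reverse : ∀ {a b : G.V} (w : G.Walk a b) {e : G.E},
    e ∈ (reverse w).edges ↔ e ∈ w.edges
  | _, _, .nil _, e => Iff.rfl
  | _, _, .cons f hf w, e => by
      rw [reverse, edges_append]
      simp [mem_edges_reverse w, or_comm]

end Walk

lemma Adj.symm {F : Set G.E} {a b : G.V} (h : G.Adj F a b) : G.Adj F b a := by
  obtain ⟨e, heF, he⟩ := h
  exact ⟨e, heF, he.trans Sym2.eq_swap⟩

lemma Reach.refl (F : Set G.E) (a : G.V) : G.Reach F a a := Relation.EqvGen.refl a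

lemma Reach.symm {F : Set G.E} {a b : G.V} (h : G.Reach F a b) : G.Reach F b a :=
  Relation.EqvGen.symm a b h

lemma Reach.trans {F : Set G.E} {a b c : G.V} (h : G.Reach F a b) (h' : G.Reach F b c) :
    G.Reach F a c := Relation.EqvGen.trans a b c h h'

lemma reach_of_adj {F : Set G.E} {a b : G.V} (h : G.Adj F a b) : G.Reach F a b :=
  Relation.EqvGen.rel a b h

lemma Adj.mono {F F' : Set G.E} (hFF : F ⊆ F') {a b : G.V} (h : G.Adj F a b) :
    G.Adj F' a b := by obtain ⟨e, heF, he⟩ := h; exact ⟨e, hFF heF, he⟩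

lemma Reach.mono {F F' : Set G.E} (hFF : F ⊆ F') {a b : G.V} (h : G.Reach F a b) :
    G.Reach F' a b := Relation.EqvGen.mono (fun _ _ h' => Adj.mono hFF h') _ _ h

lemma reach_congr_left {F : Set G.E} {a b c : G.V} (h : G.Reach F a b) :
    G.Reach F a c ↔ G.Reach F b c :=
  ⟨fun h' => h.symm.trans h', fun h' => h.trans h'⟩

lemma walk_in_reach {F : Set G.E} : ∀ {a b : G.V} (w : G.Walk a b), w.In F → G.Reach F a b
  | _, _, .nil a, _ => Reach.refl F a
  | _, _, .cons e he w, hIn => by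
      rw [Walk.In_cons] at hIn
      exact (reach_of_adj ⟨e, hIn.1, he⟩).trans (walk_in_reach w hIn.2)

lemma reach_iff_exists_walk {F : Set G.E} {a b : G.V} :
    G.Reach F a b ↔ ∃ w : G.Walk a b, w.In F := by
  constructor
  · intro h
    induction h with
    | rel p q hpq =>
        obtain ⟨e, heF, he⟩ := hpq
        exact ⟨.cons e he (.nil q), by
          intro f hf
          rcases List.mem_cons.1 hf with rfl | hf
          · exact heF
          · simp at hf⟩
    | refl p => exact ⟨.nil p, Walk.In_nil⟩
    | symm p q _ ih =>
        obtain ⟨w, hw⟩ := ih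
        exact ⟨w.reverse, fun e hee => hw e ((Walk.mem_edges_reverse w).1 hee)⟩
    | trans p q r _ _ ih1 ih2 =>
        obtain ⟨w1, hw1⟩ := ih1
        obtain ⟨w2, hw2⟩ := ih2
        refine ⟨w1.append w2, fun e hee => ?_⟩
        rw [Walk.edges_append, List.mem_append] at hee
        rcases hee with h | h
        · exact hw1 e h
        · exact hw2 e h
  · rintro ⟨w, hw⟩; exact G.walk_in_reach w hw

lemma reach_of_mem_vertices {F : Set G.E} : ∀ {a b x : G.V} (w : G.Walk a b),
    w.In F → x ∈ w.vertices → G.Reach F a x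
  | _, _, x, .nil a, _, hx => by simp at hx; subst hx; exact Reach.refl F x
  | _, _, x, .cons e he w, hIn, hx => by
      rw [Walk.In_cons] at hIn
      rcases List.mem_cons.1 hx with rfl | hx
      · exact Reach.refl F x
      · exact (reach_of_adj ⟨e, hIn.1, he⟩).trans (reach_of_mem_vertices w hIn.2 hx)

lemma reach_invariant {F : Set G.E} {P : G.V → Prop}
    (h : ∀ a b, G.Adj F a b → (P a ↔ P b)) {a b : G.V} (hr : G.Reach F a b) : P a ↔ P b := by
  induction hr with
  | rel p q hpq => exact h p q hpq
  | refl p => exact Iff.rfl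
  | symm p q _ ih => exact ih.symm
  | trans p q r _ _ ih1 ih2 => exact ih1.trans ih2

namespace Walk

lemma exists_split : ∀ {a b p q : G.V} {e : G.E} (w : G.Walk a b), (p, e, q) ∈ w.steps →
    ∃ (w₁ : G.Walk a p) (w₂ : G.Walk q b), w.edges = w₁.edges ++ e :: w₂.edges
  | _, _, p, q, e, .nil _, hs => by simp at hs
  | _, _, p, q, e, @Walk.cons _ a c b f hf w, hs => by
      rcases List.mem_cons.1 hs with h | h
      · simp only [Prod.mk.injEq] at h
        obtain ⟨rfl, rfl, rfl⟩ := h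
        exact ⟨.nil p, w, by simp⟩
      · obtain ⟨w₁, w₂, hE⟩ := exists_split w h
        exact ⟨.cons f hf w₁, w₂, by simp [hE]⟩

end Walk

/-- Removing an edge of a cycle-free set disconnects its endpoints. -/
lemma not_reach_diff_of_cycleFree {T : Set G.E} (hT : G.CycleFree T) {e : G.E} {i j : G.V}
    (heT : e ∈ T) (he : G.ends e = s(i, j)) : ¬ G.Reach (T \ {e}) i j := by
  intro hr
  obtain ⟨w, hw⟩ := reach_iff_exists_walk.1 hr
  obtain ⟨p, hsub, hnd⟩ := w.exists_nodup
  have hpIn : p.In (T \ {e}) := fun f hf => hw f (hsub f hf)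
  set c : G.Walk i i := p.append (.cons e (he.trans Sym2.eq_swap) (.nil i)) with hc
  have hcedges : c.edges = p.edges ++ [e] := by rw [hc, Walk.edges_append, Walk.edges_cons,
    Walk.edges_nil]
  have hcIn : c.In T := by
    intro f hf
    rw [hcedges, List.mem_append] at hf
    rcases hf with hf | hf
    · exact (hpIn f hf).1
    · simp at hf; subst hf; exact heT
  have hepE : e ∉ p.edges := fun hmem => (hpIn e hmem).2 rfl
  have hcvert : c.vertices = p.vertices ++ [i] := by
    rw [hc, Walk.vertices_append]; rfl
  have hpv : p.vertices = i :: p.vertices.tail := p.vertices_head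
  have hcPath : c.IsPath := by
    refine ⟨?_, ?_, ?_⟩
    · rw [hcvert, List.dropLast_concat]; exact hnd
    · rw [hcvert]
      have ht : (p.vertices ++ [i]).tail = p.vertices.tail ++ [i] := by
        rw [hpv]; rfl
      rw [ht]
      rw [hpv, List.nodup_cons] at hnd
      simp [List.Nodup.append, hnd.2, hnd.1]
    · rw [hcedges]
      simp [List.nodup_append, p.edges_nodup_of_vertices_nodup hnd, hepE]
      exact fun a ha hae => hepE (hae ▸ ha)
  have := hT i c hcIn hcPath
  rw [hcedges] at this
  simp at this

/-- A loop cannot belong to a cycle-free edge set. -/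
lemma no_loop_of_cycleFree {T : Set G.E} (hT : G.CycleFree T) {e : G.E} {x : G.V}
    (heT : e ∈ T) (he : G.ends e = s(x, x)) : False :=
  G.not_reach_diff_of_cycleFree hT heT he (Reach.refl _ x)

/-- Every vertex is reachable from one of the two endpoints of an edge removed
from a connected edge set. -/
lemma cover_of_conn {T : Set G.E} (hconn : G.ConnOn T) {e : G.E} {i j : G.V}
    (he : G.ends e = s(i, j)) (x : G.V) :
    G.Reach (T \ {e}) x i ∨ G.Reach (T \ {e}) x j := by
  have inv := G.reach_invariant (F := T)
    (P := fun z => G.Reach (T \ {e}) z i ∨ G.Reach (T \ {e}) z j) ?_ (hconn x i)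
  · exact inv.2 (Or.inl (Reach.refl _ i))
  · intro a b hadj
    obtain ⟨f, hfT, hf⟩ := hadj
    by_cases hfe : f = e
    · subst hfe
      rw [he] at hf
      rcases Sym2.eq_iff.1 hf with ⟨rfl, rfl⟩ | ⟨rfl, rfl⟩
      · exact iff_of_true (Or.inl (Reach.refl _ _)) (Or.inr (Reach.refl _ _))
      · exact iff_of_true (Or.inr (Reach.refl _ _)) (Or.inl (Reach.refl _ _))
    · have hadj' : G.Adj (T \ {e}) a b := ⟨f, ⟨hfT, hfe⟩, hf⟩
      constructor
      · rintro (h | h)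
        · exact Or.inl (((G.reach_of_adj hadj').symm).trans h)
        · exact Or.inr (((G.reach_of_adj hadj').symm).trans h)
      · rintro (h | h)
        · exact Or.inl ((G.reach_of_adj hadj').trans h)
        · exact Or.inr ((G.reach_of_adj hadj').trans h)

lemma cycleFree_subset {F F' : Set G.E} (h : F ⊆ F') (hF' : G.CycleFree F') :
    G.CycleFree F := fun i w hIn hP => hF' i w (hIn.mono h) hP

/-- Adding an edge between two different components preserves cycle-freeness. -/
lemma cycleFree_insert {F : Set G.E} (hF : G.CycleFree F) {e : G.E} {i j : G.V}
    (he : G.ends e = s(i, j)) (hnr : ¬ G.Reach F i j) : G.CycleFree (insert e F) := by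
  have heF : e ∉ F := fun h => hnr (G.reach_of_adj ⟨e, h, he⟩)
  intro a c hcIn hcPath
  by_cases hce : e ∈ c.edges
  · exfalso
    obtain ⟨p, q, hpq⟩ := (Walk.mem_edges_iff_steps c).1 hce
    obtain ⟨w₁, w₂, hE⟩ := c.exists_split hpq
    have hnd := hcPath.2.2
    rw [hE] at hnd
    have hnd2 := List.nodup_append.1 hnd
    have he1 : e ∉ w₁.edges := fun h => hnd2.2.2 e h e List.mem_cons_self rfl
    have he2 : e ∉ w₂.edges := (List.nodup_cons.1 hnd2.2.1).1
    have hIn1 : w₁.In F := by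
      intro f hf
      have hfe : f ≠ e := fun h => he1 (h ▸ hf)
      have : f ∈ insert e F := hcIn f (by rw [hE]; simp [hf])
      rcases Set.mem_insert_iff.1 this with h | h
      · exact absurd h hfe
      · exact h
    have hIn2 : w₂.In F := by
      intro f hf
      have hfe : f ≠ e := fun h => he2 (h ▸ hf)
      have : f ∈ insert e F := hcIn f (by rw [hE]; simp [hf])
      rcases Set.mem_insert_iff.1 this with h | h
      · exact absurd h hfe
      · exact h
    have hqp : G.Reach F q p := by
      have h2 := G.walk_in_reach w₂ hIn2
      have h1 := G.walk_in_reach w₁ hIn1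
      exact h2.trans h1
    have hends := c.steps_ends hpq
    rw [he] at hends
    rcases Sym2.eq_iff.1 hends.symm with ⟨rfl, rfl⟩ | ⟨rfl, rfl⟩
    · exact hnr hqp.symm
    · exact hnr hqp
  · refine hF a c ?_ hcPath
    intro f hf
    have : f ∈ insert e F := hcIn f hf
    rcases Set.mem_insert_iff.1 this with h | h
    · exact absurd (h ▸ hf) hce
    · exact h

/-- A connected graph possesses a spanning tree. -/
lemma exists_spanning_tree (hG : G.Connected) : ∃ T : Finset G.E, G.IsSpanningTree ↑T := by
  classical
  have hne : (Finset.univ.filter (fun T : Finset G.E => G.CycleFree ↑T)).Nonempty := by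
    refine ⟨∅, Finset.mem_filter.2 ⟨Finset.mem_univ _, ?_⟩⟩
    intro i w hIn hP
    cases hE : w.edges with
    | nil => rfl
    | cons f t => exact absurd (hIn f (hE ▸ (List.mem_cons_self : f ∈ f :: t))) (by simp)
  obtain ⟨T, hTmem, hTmax⟩ := Finset.exists_max_image _ Finset.card hne
  have hTcf : G.CycleFree ↑T := (Finset.mem_filter.1 hTmem).2
  refine ⟨T, ?_, hTcf⟩
  have hall : ∀ (e : G.E) (p q : G.V), G.ends e = s(p, q) → G.Reach ↑T p q := by
    by_contra hno
    push_neg at hno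
    obtain ⟨e, p, q, he, hnr⟩ := hno
    have heT : e ∉ T := fun h => hnr (G.reach_of_adj ⟨e, h, he⟩)
    have hcf' : G.CycleFree ↑(insert e T) := by
      rw [Finset.coe_insert]
      exact G.cycleFree_insert hTcf he hnr
    have hmem' : insert e T ∈ Finset.univ.filter (fun T : Finset G.E => G.CycleFree ↑T) :=
      Finset.mem_filter.2 ⟨Finset.mem_univ _, hcf'⟩
    have := hTmax _ hmem'
    rw [Finset.card_insert_of_notMem heT] at this
    omega
  intro a b
  have := hG a b
  induction this with
  | rel p q hpq =>
      obtain ⟨e, _, he⟩ := hpq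
      exact hall e p q he
  | refl p => exact Reach.refl _ p
  | symm p q _ ih => exact ih.symm
  | trans p q r _ _ ih1 ih2 => exact ih1.trans ih2

/-- If a path from `k` to `l` in a cycle-free set traverses `e` from `i` to `j`,
then in `T \ {e}` we can reach `i` from `k` and `l` from `j`, while `i` and `j`
are disconnected. -/
lemma steps_char_forward {T : Set G.E} (hcf : G.CycleFree T) {k l i j : G.V} {e : G.E}
    (w : G.Walk k l) (hP : w.IsPath) (hIn : w.In T) (hs : (i, e, j) ∈ w.steps) :
    G.Reach (T \ {e}) k i ∧ G.Reach (T \ {e}) j l ∧ ¬ G.Reach (T \ {e}) i j := by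
  have he : G.ends e = s(i, j) := w.steps_ends hs
  have heT : e ∈ T := hIn e (w.mem_edges_of_steps hs)
  have hnr : ¬ G.Reach (T \ {e}) i j := G.not_reach_diff_of_cycleFree hcf heT he
  obtain ⟨w₁, w₂, hE⟩ := w.exists_split hs
  have hnd := hP.2.2
  rw [hE] at hnd
  have hnd2 := List.nodup_append.1 hnd
  have he1 : e ∉ w₁.edges := fun h => hnd2.2.2 e h e List.mem_cons_self rfl
  have he2 : e ∉ w₂.edges := (List.nodup_cons.1 hnd2.2.1).1
  have hIn1 : w₁.In (T \ {e}) := fun f hf =>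
    ⟨hIn f (by rw [hE]; simp [hf]), fun hfe => he1 (hfe ▸ hf)⟩
  have hIn2 : w₂.In (T \ {e}) := fun f hf =>
    ⟨hIn f (by rw [hE]; simp [hf]), fun hfe => he2 (hfe ▸ hf)⟩
  exact ⟨G.walk_in_reach w₁ hIn1, G.walk_in_reach w₂ hIn2, hnr⟩

/-- Conversely, the separation data produces a path traversing `e` from `i` to `j`. -/
lemma steps_char_backward {T : Set G.E} {k l i j : G.V} {e : G.E}
    (heT : e ∈ T) (he : G.ends e = s(i, j))
    (h1 : G.Reach (T \ {e}) k i) (h2 : G.Reach (T \ {e}) j l)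
    (h3 : ¬ G.Reach (T \ {e}) i j) :
    ∃ w : G.Walk k l, w.IsPath ∧ w.In T ∧ (i, e, j) ∈ w.steps := by
  obtain ⟨q₁, hq₁⟩ := reach_iff_exists_walk.1 h1
  obtain ⟨p₁, hp₁sub, hp₁nd⟩ := q₁.exists_nodup
  have hp₁In : p₁.In (T \ {e}) := fun f hf => hq₁ f (hp₁sub f hf)
  obtain ⟨q₂, hq₂⟩ := reach_iff_exists_walk.1 h2
  obtain ⟨p₂, hp₂sub, hp₂nd⟩ := q₂.exists_nodup
  have hp₂In : p₂.In (T \ {e}) := fun f hf => hq₂ f (hp₂sub f hf)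
  refine ⟨p₁.append (.cons e he p₂), ?_, ?_, ?_⟩
  · apply Walk.isPath_of_nodup
    rw [Walk.vertices_append, Walk.vertices_cons, List.tail_cons]
    rw [List.nodup_append]
    refine ⟨hp₁nd, hp₂nd, ?_⟩
    intro x hx y hx2 hxy
    subst hxy
    have hxi : G.Reach (T \ {e}) i x := h1.symm.trans (G.reach_of_mem_vertices p₁ hp₁In hx)
    have hxj : G.Reach (T \ {e}) j x := G.reach_of_mem_vertices p₂ hp₂In hx2
    exact h3 (hxi.trans hxj.symm)
  · intro f hf
    rw [Walk.edges_append, Walk.edges_cons, List.mem_append] at hf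
    rcases hf with hf | hf
    · exact (hp₁In f hf).1
    · rcases List.mem_cons.1 hf with rfl | hf
      · exact heT
      · exact (hp₂In f hf).1
  · rw [Walk.steps_append, Walk.steps_cons]
    simp

/-- Every path from `k` to `l` in a spanning tree traverses `e` from `i` to `j`,
given the separation data. -/
lemma steps_mem_of_char {T : Set G.E} (hcf : G.CycleFree T) {k l i j : G.V} {e : G.E}
    (w : G.Walk k l) (hP : w.IsPath) (hIn : w.In T) (he : G.ends e = s(i, j))
    (h1 : G.Reach (T \ {e}) k i) (h2 : G.Reach (T \ {e}) j l)
    (h3 : ¬ G.Reach (T \ {e}) i j) : (i, e, j) ∈ w.steps := by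
  have hkl : ¬ G.Reach (T \ {e}) k l := fun h => h3 ((h1.symm.trans h).trans h2.symm)
  have hce : e ∈ w.edges := by
    by_contra hce
    refine hkl (G.walk_in_reach w (fun f hf => ⟨hIn f hf, fun hfe => hce (hfe ▸ hf)⟩))
  obtain ⟨p, q, hpq⟩ := (Walk.mem_edges_iff_steps w).1 hce
  have hends := w.steps_ends hpq
  rw [he] at hends
  rcases Sym2.eq_iff.1 hends.symm with ⟨rfl, rfl⟩ | ⟨h4, h5⟩
  · exact hpq
  · exfalso
    obtain ⟨w₁, w₂, hE⟩ := w.exists_split hpq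
    have hnd := hP.2.2
    rw [hE] at hnd
    have hnd2 := List.nodup_append.1 hnd
    have he1 : e ∉ w₁.edges := fun h => hnd2.2.2 e h e List.mem_cons_self rfl
    have hIn1 : w₁.In (T \ {e}) := fun f hf =>
      ⟨hIn f (by rw [hE]; simp [hf]), fun hfe => he1 (hfe ▸ hf)⟩
    have hkp : G.Reach (T \ {e}) k p := G.walk_in_reach w₁ hIn1
    rw [h4] at hkp
    exact h3 (h1.symm.trans hkp)
lemma count_src {k l : G.V} (w : G.Walk k l) (hnd : w.steps.Nodup) (x : G.V) :
    (∑ y : G.V, ∑ e : G.E, if (x, e, y) ∈ w.steps then (1 : ℝ) else 0)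
      = (w.steps.map (fun s => if x = s.1 then (1 : ℝ) else 0)).sum := by
  classical
  rw [← Finset.sum_product']
  rw [← List.sum_toFinset _ hnd]
  rw [Finset.sum_boole, Finset.sum_boole]
  norm_cast
  apply Finset.card_nbij' (fun p => (x, p.2, p.1)) (fun t => (t.2.2, t.2.1))
  · intro p hp
    rw [Finset.mem_coe, Finset.mem_filter] at hp ⊢
    exact ⟨List.mem_toFinset.2 hp.2, rfl⟩
  · intro t ht
    rw [Finset.mem_coe, Finset.mem_filter] at ht
    rw [Finset.mem_coe, Finset.mem_filter]
    refine ⟨by simp, ?_⟩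
    have h2 := ht.2
    have hm := List.mem_toFinset.1 ht.1
    show (x, t.2.1, t.2.2) ∈ w.steps
    rw [h2]
    exact hm
  · intro p _; rfl
  · intro t ht
    rw [Finset.mem_coe, Finset.mem_filter] at ht
    show (x, t.2.1, t.2.2) = t
    rw [ht.2]

lemma count_tgt {k l : G.V} (w : G.Walk k l) (hnd : w.steps.Nodup) (x : G.V) :
    (∑ y : G.V, ∑ e : G.E, if (y, e, x) ∈ w.steps then (1 : ℝ) else 0)
      = (w.steps.map (fun s => if x = s.2.2 then (1 : ℝ) else 0)).sum := by
  classical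
  rw [← Finset.sum_product']
  rw [← List.sum_toFinset _ hnd]
  rw [Finset.sum_boole, Finset.sum_boole]
  norm_cast
  apply Finset.card_nbij' (fun p => (p.1, p.2, x)) (fun t => (t.1, t.2.1))
  · intro p hp
    rw [Finset.mem_coe, Finset.mem_filter] at hp ⊢
    exact ⟨List.mem_toFinset.2 hp.2, rfl⟩
  · intro t ht
    rw [Finset.mem_coe, Finset.mem_filter] at ht
    rw [Finset.mem_coe, Finset.mem_filter]
    refine ⟨by simp, ?_⟩
    have h2 := ht.2
    have hm := List.mem_toFinset.1 ht.1
    show (t.1, t.2.1, x) ∈ w.steps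
    rw [h2]
    exact hm
  · intro p _; rfl
  · intro t ht
    rw [Finset.mem_coe, Finset.mem_filter] at ht
    show (t.1, t.2.1, x) = t
    rw [ht.2]

lemma steps_telescope (x : G.V) : ∀ {k l : G.V} (w : G.Walk k l),
    (w.steps.map (fun s => if x = s.1 then (1 : ℝ) else 0)).sum
      - (w.steps.map (fun s => if x = s.2.2 then (1 : ℝ) else 0)).sum
      = (if x = k then (1 : ℝ) else 0) - (if x = l then 1 else 0)
  | _, _, .nil a => by simp
  | _, _, @Walk.cons _ a c b e he w => by
      have ih := steps_telescope x w
      simp only [Walk.steps_cons, List.map_cons, List.sum_cons]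
      linarith [ih]

/-- Kirchhoff's node law for the tree current. -/
lemma node_law {T : Set G.E} (hconn : G.ConnOn T) (hcf : G.CycleFree T) (k l x : G.V) :
    (∑ y : G.V, ∑ e : G.E, if G.ends e = s(x, y) then G.treeCurrent T k l e x y else 0)
      = (if x = k then (1 : ℝ) else 0) - (if x = l then 1 else 0) := by
  classical
  obtain ⟨w₀, hw₀⟩ := reach_iff_exists_walk.1 (hconn k l)
  obtain ⟨w, hwsub, hwnd⟩ := w₀.exists_nodup
  have hwIn : w.In T := fun f hf => hw₀ f (hwsub f hf)
  have hwP : w.IsPath := Walk.isPath_of_nodup w hwnd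
  have key : ∀ (y : G.V) (e : G.E),
      (if G.ends e = s(x, y) then G.treeCurrent T k l e x y else 0)
        = (if (x, e, y) ∈ w.steps then (1 : ℝ) else 0)
          - (if (y, e, x) ∈ w.steps then 1 else 0) := by
    intro y e
    by_cases hcase : G.ends e = s(x, y)
    · rw [if_pos hcase]
      have hpos : (e ∈ T ∧ ∃ w' : G.Walk k l, w'.IsPath ∧ w'.In T ∧ (x, e, y) ∈ w'.steps)
          ↔ (x, e, y) ∈ w.steps := by
        constructor
        · rintro ⟨heT, w', hP', hIn', hs'⟩
          obtain ⟨c1, c2, c3⟩ := G.steps_char_forward hcf w' hP' hIn' hs'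
          exact G.steps_mem_of_char hcf w hwP hwIn hcase c1 c2 c3
        · intro hs
          exact ⟨hwIn e (w.mem_edges_of_steps hs), w, hwP, hwIn, hs⟩
      have hneg : (e ∈ T ∧ ∃ w' : G.Walk k l, w'.IsPath ∧ w'.In T ∧ (y, e, x) ∈ w'.steps)
          ↔ (y, e, x) ∈ w.steps := by
        constructor
        · rintro ⟨heT, w', hP', hIn', hs'⟩
          obtain ⟨c1, c2, c3⟩ := G.steps_char_forward hcf w' hP' hIn' hs'
          exact G.steps_mem_of_char hcf w hwP hwIn (hcase.trans Sym2.eq_swap) c1 c2 c3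
        · intro hs
          exact ⟨hwIn e (w.mem_edges_of_steps hs), w, hwP, hwIn, hs⟩
      have hnotboth : ¬ ((x, e, y) ∈ w.steps ∧ (y, e, x) ∈ w.steps) := by
        rintro ⟨hs1, hs2⟩
        have := w.steps_eq_of_edge_eq hwP.2.2 hs1 hs2
        obtain ⟨rfl, -⟩ := this
        exact G.no_loop_of_cycleFree hcf (hwIn e (w.mem_edges_of_steps hs1))
          (w.steps_ends hs1)
      simp only [treeCurrent]
      by_cases hp : (x, e, y) ∈ w.steps
      · rw [if_pos (hpos.2 hp), if_pos hp, if_neg (fun hn => hnotboth ⟨hp, hn⟩)]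
        norm_num
      · by_cases hn : (y, e, x) ∈ w.steps
        · rw [if_neg (fun h => hp (hpos.1 h)), if_pos (hneg.2 hn), if_neg hp, if_pos hn]
          norm_num
        · rw [if_neg (fun h => hp (hpos.1 h)), if_neg (fun h => hn (hneg.1 h)),
            if_neg hp, if_neg hn]
          norm_num
    · rw [if_neg hcase]
      have h1 : (x, e, y) ∉ w.steps := fun h => hcase (w.steps_ends h)
      have h2 : (y, e, x) ∉ w.steps := fun h =>
        hcase ((w.steps_ends h).trans Sym2.eq_swap)
      rw [if_neg h1, if_neg h2]
      ring
  calc (∑ y : G.V, ∑ e : G.E, if G.ends e = s(x, y) then G.treeCurrent T k l e x y else 0)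
      = ∑ y : G.V, ∑ e : G.E, ((if (x, e, y) ∈ w.steps then (1 : ℝ) else 0)
          - (if (y, e, x) ∈ w.steps then 1 else 0)) := by
        exact Finset.sum_congr rfl (fun y _ => Finset.sum_congr rfl (fun e _ => key y e))
    _ = (∑ y : G.V, ∑ e : G.E, if (x, e, y) ∈ w.steps then (1 : ℝ) else 0)
          - (∑ y : G.V, ∑ e : G.E, if (y, e, x) ∈ w.steps then (1 : ℝ) else 0) := by
        rw [← Finset.sum_sub_distrib]
        exact Finset.sum_congr rfl (fun y _ => Finset.sum_sub_distrib _ _)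
    _ = (if x = k then (1 : ℝ) else 0) - (if x = l then 1 else 0) := by
        rw [count_src w (w.steps_nodup hwP.2.2) x, count_tgt w (w.steps_nodup hwP.2.2) x]
        exact steps_telescope x w

lemma treeCurrent_eq_one {T : Set G.E} {k l i j : G.V} {e : G.E}
    (heT : e ∈ T) (he : G.ends e = s(i, j))
    (h1 : G.Reach (T \ {e}) k i) (h2 : G.Reach (T \ {e}) j l)
    (h3 : ¬ G.Reach (T \ {e}) i j) : G.treeCurrent T k l e i j = 1 := by
  simp only [treeCurrent]
  rw [if_pos ⟨heT, G.steps_char_backward heT he h1 h2 h3⟩]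

lemma treeCurrent_eq_neg_one {T : Set G.E} (hcf : G.CycleFree T) {k l i j : G.V} {e : G.E}
    (heT : e ∈ T) (he : G.ends e = s(i, j))
    (h1 : G.Reach (T \ {e}) k j) (h2 : G.Reach (T \ {e}) i l)
    (h3 : ¬ G.Reach (T \ {e}) i j) : G.treeCurrent T k l e i j = -1 := by
  simp only [treeCurrent]
  rw [if_neg, if_pos ⟨heT, G.steps_char_backward heT (he.trans Sym2.eq_swap) h1 h2
    (fun h => h3 h.symm)⟩]
  rintro ⟨-, w', hP', hIn', hs'⟩
  obtain ⟨c1, c2, c3⟩ := G.steps_char_forward hcf w' hP' hIn' hs'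
  exact h3 (c1.symm.trans h1)

lemma treeCurrent_cases {T : Set G.E} (hcf : G.CycleFree T) {k l i j : G.V} {e : G.E}
    (h : G.treeCurrent T k l e i j ≠ 0) :
    e ∈ T ∧ ((G.Reach (T \ {e}) k i ∧ G.Reach (T \ {e}) j l ∧ ¬ G.Reach (T \ {e}) i j)
      ∨ (G.Reach (T \ {e}) k j ∧ G.Reach (T \ {e}) i l ∧ ¬ G.Reach (T \ {e}) i j)) := by
  simp only [treeCurrent] at h
  split_ifs at h with h1 h2
  · obtain ⟨heT, w', hP', hIn', hs'⟩ := h1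
    obtain ⟨c1, c2, c3⟩ := G.steps_char_forward hcf w' hP' hIn' hs'
    exact ⟨heT, Or.inl ⟨c1, c2, c3⟩⟩
  · obtain ⟨heT, w', hP', hIn', hs'⟩ := h2
    obtain ⟨c1, c2, c3⟩ := G.steps_char_forward hcf w' hP' hIn' hs'
    exact ⟨heT, Or.inr ⟨c1, c2, fun hh => c3 hh.symm⟩⟩
  · exact absurd rfl h

/-- The key reindexing identity between 2-forests and spanning trees containing `e`. -/
lemma key_reindex (μ : G.E → ℝ) (hμ : ∀ f : G.E, 0 < μ f) (k l : G.V)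
    {e : G.E} {i j : G.V} (he : G.ends e = s(i, j)) :
    (∑ F ∈ Finset.univ.filter (fun F : Finset G.E => G.CycleFree ↑F ∧
        (∀ x : G.V, G.Reach ↑F x k ∨ G.Reach ↑F x l) ∧ ¬ G.Reach ↑F k l),
      ((∏ f ∈ Finset.univ \ F, μ f) *
        ((if G.Reach ↑F i k then (1 : ℝ) else 0) - (if G.Reach ↑F j k then 1 else 0))))
    = ∑ T ∈ Finset.univ.filter (fun T : Finset G.E => G.IsSpanningTree ↑T),
        (μ e * ((∏ f ∈ Finset.univ \ T, μ f) * G.treeCurrent ↑T k l e i j)) := by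
  classical
  set fL : Finset G.E → ℝ := fun F => (∏ f ∈ Finset.univ \ F, μ f) *
      ((if G.Reach ↑F i k then (1 : ℝ) else 0) - (if G.Reach ↑F j k then 1 else 0)) with hfL
  set fR : Finset G.E → ℝ := fun T =>
      μ e * ((∏ f ∈ Finset.univ \ T, μ f) * G.treeCurrent ↑T k l e i j) with hfR
  have hproddiff : ∀ F : Finset G.E, e ∉ F →
      (∏ f ∈ Finset.univ \ F, μ f) = μ e * ∏ f ∈ Finset.univ \ insert e F, μ f := by
    intro F heF
    rw [Finset.sdiff_insert]
    exact (Finset.mul_prod_erase _ _ (Finset.mem_sdiff.2 ⟨Finset.mem_univ _, heF⟩)).symm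
  have HF : ∀ F : Finset G.E, (G.CycleFree ↑F ∧ (∀ x : G.V, G.Reach ↑F x k ∨ G.Reach ↑F x l) ∧
      ¬ G.Reach ↑F k l) → fL F ≠ 0 →
      e ∉ F ∧ G.IsSpanningTree ↑(insert e F) ∧ fL F = fR (insert e F) := by
    intro F hQ hne
    obtain ⟨hcf, hcov, hkl⟩ := hQ
    have hdiff : ¬((if G.Reach ↑F i k then (1 : ℝ) else 0)
        - (if G.Reach ↑F j k then 1 else 0) = 0) := by
      intro h; exact hne (by rw [hfL]; dsimp only; rw [h, mul_zero])
    by_cases hik : G.Reach ↑F i k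
    · have hjk : ¬ G.Reach ↑F j k := by
        intro hjk; exact hdiff (by rw [if_pos hik, if_pos hjk]; ring)
      have hjl : G.Reach ↑F j l := (hcov j).resolve_left hjk
      have hnr : ¬ G.Reach ↑F i j := fun h => hjk (h.symm.trans hik)
      have heF : e ∉ F := fun h => hnr (G.reach_of_adj ⟨e, by exact_mod_cast h, he⟩)
      have hTe : (↑(insert e F) : Set G.E) \ {e} = ↑F := by
        rw [Finset.coe_insert]
        exact Set.insert_diff_self_of_notMem (by exact_mod_cast heF)
      have hcf' : G.CycleFree ↑(insert e F) := by
        rw [Finset.coe_insert]; exact G.cycleFree_insert hcf he hnr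
      have hsub : (↑F : Set G.E) ⊆ ↑(insert e F) := by
        rw [Finset.coe_insert]; exact Set.subset_insert _ _
      have hadj : G.Reach ↑(insert e F) i j :=
        G.reach_of_adj ⟨e, by simp, he⟩
      have hkl' : G.Reach ↑(insert e F) k l :=
        ((Reach.mono hsub hik.symm).trans hadj).trans (Reach.mono hsub hjl)
      have hconn' : G.ConnOn ↑(insert e F) := by
        intro a b
        have ha := (hcov a).imp (Reach.mono hsub) (Reach.mono hsub)
        have hb := (hcov b).imp (Reach.mono hsub) (Reach.mono hsub)
        have ha' : G.Reach ↑(insert e F) a k := ha.elim id (fun h => h.trans hkl'.symm)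
        have hb' : G.Reach ↑(insert e F) b k := hb.elim id (fun h => h.trans hkl'.symm)
        exact ha'.trans hb'.symm
      have htc : G.treeCurrent ↑(insert e F) k l e i j = 1 := by
        refine G.treeCurrent_eq_one (by simp) he ?_ ?_ ?_ <;> rw [hTe]
        exacts [hik.symm, hjl, hnr]
      refine ⟨heF, ⟨hconn', hcf'⟩, ?_⟩
      rw [hfL, hfR]; dsimp only
      rw [if_pos hik, if_neg hjk, htc, hproddiff F heF]
      ring
    · have hjk : G.Reach ↑F j k := by
        by_contra hjk
        exact hdiff (by rw [if_neg hik, if_neg hjk]; ring)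
      have hil : G.Reach ↑F i l := (hcov i).resolve_left hik
      have hnr : ¬ G.Reach ↑F i j := fun h => hik (h.trans hjk)
      have heF : e ∉ F := fun h => hnr (G.reach_of_adj ⟨e, by exact_mod_cast h, he⟩)
      have hTe : (↑(insert e F) : Set G.E) \ {e} = ↑F := by
        rw [Finset.coe_insert]
        exact Set.insert_diff_self_of_notMem (by exact_mod_cast heF)
      have hcf' : G.CycleFree ↑(insert e F) := by
        rw [Finset.coe_insert]; exact G.cycleFree_insert hcf he hnr
      have hsub : (↑F : Set G.E) ⊆ ↑(insert e F) := by
        rw [Finset.coe_insert]; exact Set.subset_insert _ _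
      have hadj : G.Reach ↑(insert e F) i j :=
        G.reach_of_adj ⟨e, by simp, he⟩
      have hkl' : G.Reach ↑(insert e F) k l :=
        ((Reach.mono hsub hjk.symm).trans hadj.symm).trans (Reach.mono hsub hil)
      have hconn' : G.ConnOn ↑(insert e F) := by
        intro a b
        have ha := (hcov a).imp (Reach.mono hsub) (Reach.mono hsub)
        have hb := (hcov b).imp (Reach.mono hsub) (Reach.mono hsub)
        have ha' : G.Reach ↑(insert e F) a k := ha.elim id (fun h => h.trans hkl'.symm)
        have hb' : G.Reach ↑(insert e F) b k := hb.elim id (fun h => h.trans hkl'.symm)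
        exact ha'.trans hb'.symm
      have htc : G.treeCurrent ↑(insert e F) k l e i j = -1 := by
        refine G.treeCurrent_eq_neg_one hcf' (by simp) he ?_ ?_ ?_ <;> rw [hTe]
        exacts [hjk.symm, hil, hnr]
      refine ⟨heF, ⟨hconn', hcf'⟩, ?_⟩
      rw [hfL, hfR]; dsimp only
      rw [if_neg hik, if_pos hjk, htc, hproddiff F heF]
      ring
  have HT : ∀ T : Finset G.E, G.IsSpanningTree ↑T → fR T ≠ 0 →
      e ∈ T ∧ (G.CycleFree ↑(T.erase e) ∧
        (∀ x : G.V, G.Reach ↑(T.erase e) x k ∨ G.Reach ↑(T.erase e) x l) ∧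
        ¬ G.Reach ↑(T.erase e) k l) ∧ fL (T.erase e) = fR T := by
    intro T hT hne
    obtain ⟨hconn, hcf⟩ := hT
    have htcne : G.treeCurrent ↑T k l e i j ≠ 0 := by
      intro h; exact hne (by rw [hfR]; dsimp only; rw [h, mul_zero, mul_zero])
    obtain ⟨heT, hcases⟩ := G.treeCurrent_cases hcf htcne
    have heT' : e ∈ T := by exact_mod_cast heT
    have hce : (↑(T.erase e) : Set G.E) = ↑T \ {e} := Finset.coe_erase e T
    have hcf' : G.CycleFree ↑(T.erase e) := by
      rw [hce]; exact G.cycleFree_subset Set.diff_subset hcf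
    have heF : e ∉ T.erase e := Finset.notMem_erase e T
    have hprod := hproddiff (T.erase e) heF
    rw [Finset.insert_erase heT'] at hprod
    rcases hcases with ⟨c1, c2, c3⟩ | ⟨c1, c2, c3⟩
    · have htc1 : G.treeCurrent ↑T k l e i j = 1 := G.treeCurrent_eq_one heT he c1 c2 c3
      have hcov : ∀ x : G.V, G.Reach ↑(T.erase e) x k ∨ G.Reach ↑(T.erase e) x l := by
        intro x
        rw [hce]
        rcases G.cover_of_conn hconn he x with h | h
        · exact Or.inl (h.trans c1.symm)
        · exact Or.inr (h.trans c2)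
      have hkl : ¬ G.Reach ↑(T.erase e) k l := by
        rw [hce]; intro h; exact c3 ((c1.symm.trans h).trans c2.symm)
      have hik : G.Reach ↑(T.erase e) i k := by rw [hce]; exact c1.symm
      have hjk : ¬ G.Reach ↑(T.erase e) j k := by
        rw [hce]; intro h; exact c3 ((h.trans c1).symm)
      refine ⟨heT', ⟨hcf', hcov, hkl⟩, ?_⟩
      rw [hfL, hfR]; dsimp only
      rw [if_pos hik, if_neg hjk, htc1, hprod]
      ring
    · have htc1 : G.treeCurrent ↑T k l e i j = -1 :=
        G.treeCurrent_eq_neg_one hcf heT he c1 c2 c3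
      have hcov : ∀ x : G.V, G.Reach ↑(T.erase e) x k ∨ G.Reach ↑(T.erase e) x l := by
        intro x
        rw [hce]
        rcases G.cover_of_conn hconn he x with h | h
        · exact Or.inr (h.trans c2)
        · exact Or.inl (h.trans c1.symm)
      have hkl : ¬ G.Reach ↑(T.erase e) k l := by
        rw [hce]; intro h; exact c3 (c2.trans (h.symm.trans c1))
      have hik : ¬ G.Reach ↑(T.erase e) i k := by
        rw [hce]; intro h; exact c3 (h.trans c1)
      have hjk : G.Reach ↑(T.erase e) j k := by rw [hce]; exact c1.symm
      refine ⟨heT', ⟨hcf', hcov, hkl⟩, ?_⟩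
      rw [hfL, hfR]; dsimp only
      rw [if_neg hik, if_pos hjk, htc1, hprod]
      ring
  rw [← Finset.sum_filter_ne_zero (f := fL), ← Finset.sum_filter_ne_zero (f := fR)]
  apply Finset.sum_nbij' (fun F => insert e F) (fun T => T.erase e)
  · intro F hF
    rw [Finset.mem_filter] at hF
    obtain ⟨hF1, hne⟩ := hF
    rw [Finset.mem_filter] at hF1
    obtain ⟨hF2, hST, hval⟩ := HF F hF1.2 hne
    refine Finset.mem_filter.2 ⟨Finset.mem_filter.2 ⟨Finset.mem_univ _, hST⟩, ?_⟩
    rw [← hval]; exact hne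
  · intro T hT
    rw [Finset.mem_filter] at hT
    obtain ⟨hT1, hne⟩ := hT
    rw [Finset.mem_filter] at hT1
    obtain ⟨heT, hQ, hval⟩ := HT T hT1.2 hne
    refine Finset.mem_filter.2 ⟨Finset.mem_filter.2 ⟨Finset.mem_univ _, hQ⟩, ?_⟩
    rw [hval]; exact hne
  · intro F hF
    rw [Finset.mem_filter] at hF
    obtain ⟨hF1, hne⟩ := hF
    rw [Finset.mem_filter] at hF1
    obtain ⟨hF2, -, -⟩ := HF F hF1.2 hne
    exact Finset.erase_insert hF2
  · intro T hT
    rw [Finset.mem_filter] at hT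
    obtain ⟨hT1, hne⟩ := hT
    rw [Finset.mem_filter] at hT1
    obtain ⟨heT, -, -⟩ := HT T hT1.2 hne
    exact Finset.insert_erase heT
  · intro F hF
    rw [Finset.mem_filter] at hF
    obtain ⟨hF1, hne⟩ := hF
    rw [Finset.mem_filter] at hF1
    obtain ⟨-, -, hval⟩ := HF F hF1.2 hne
    exact hval

lemma lap_apply (μ : G.E → ℝ) (v : G.V → ℝ) (x : G.V) :
    G.lap μ v x = ∑ y : G.V, ∑ e : G.E,
      if G.ends e = s(x, y) then (v x - v y) / μ e else 0 := rfl

lemma lap_sub (μ : G.E → ℝ) (u w : G.V → ℝ) (x : G.V) :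
    G.lap μ (fun y => u y - w y) x = G.lap μ u x - G.lap μ w x := by
  simp only [lap]
  rw [← Finset.sum_sub_distrib]
  refine Finset.sum_congr rfl (fun y _ => ?_)
  rw [← Finset.sum_sub_distrib]
  refine Finset.sum_congr rfl (fun e _ => ?_)
  split_ifs with hc
  · ring
  · ring

lemma lap_smul (μ : G.E → ℝ) (c : ℝ) (u : G.V → ℝ) (x : G.V) :
    G.lap μ (fun y => c * u y) x = c * G.lap μ u x := by
  simp only [lap]
  rw [Finset.mul_sum]
  refine Finset.sum_congr rfl (fun y _ => ?_)
  rw [Finset.mul_sum]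
  refine Finset.sum_congr rfl (fun e _ => ?_)
  split_ifs with hc
  · ring
  · ring

lemma lap_zero_const (hG : G.Connected) (μ : G.E → ℝ) (hμ : ∀ f : G.E, 0 < μ f)
    {d : G.V → ℝ} (h : ∀ x, G.lap μ d x = 0) (a b : G.V) : d a = d b := by
  classical
  obtain ⟨x₀, -, hx₀⟩ := Finset.exists_max_image Finset.univ d ⟨a, Finset.mem_univ a⟩
  suffices H : ∀ c, d c = d x₀ by rw [H a, H b]
  have step : ∀ p q : G.V, G.Adj Set.univ p q → d p = d x₀ → d q = d x₀ := by
    intro p q hadj hp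
    obtain ⟨f, -, hf⟩ := hadj
    have h0 := h p
    rw [lap_apply] at h0
    have hnn : ∀ y ∈ (Finset.univ : Finset G.V),
        0 ≤ ∑ e : G.E, if G.ends e = s(p, y) then (d p - d y) / μ e else 0 := by
      intro y _
      apply Finset.sum_nonneg
      intro e _
      split_ifs with hc
      · apply div_nonneg _ (le_of_lt (hμ e))
        have := hx₀ y (Finset.mem_univ y)
        rw [hp]
        linarith
      · exact le_refl 0
    have hz := (Finset.sum_eq_zero_iff_of_nonneg hnn).1 h0 q (Finset.mem_univ q)
    have hnn2 : ∀ e ∈ (Finset.univ : Finset G.E),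
        0 ≤ if G.ends e = s(p, q) then (d p - d q) / μ e else 0 := by
      intro e _
      split_ifs with hc
      · apply div_nonneg _ (le_of_lt (hμ e))
        have := hx₀ q (Finset.mem_univ q)
        rw [hp]
        linarith
      · exact le_refl 0
    have hz2 := (Finset.sum_eq_zero_iff_of_nonneg hnn2).1 hz f (Finset.mem_univ f)
    rw [if_pos hf] at hz2
    rcases div_eq_zero_iff.1 hz2 with hc | hc
    · rw [← hp]; linarith
    · exact absurd hc (ne_of_gt (hμ f))
  have inv : ∀ p q : G.V, G.Adj Set.univ p q → (d p = d x₀ ↔ d q = d x₀) :=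
    fun p q hadj => ⟨step p q hadj, step q p hadj.symm⟩
  intro c
  exact (G.reach_invariant inv (hG c x₀)).2 rfl

lemma treeCurrent_abs_le (T : Set G.E) (k l : G.V) (e : G.E) (i j : G.V) :
    |G.treeCurrent T k l e i j| ≤ 1 := by
  simp only [treeCurrent]
  split_ifs <;> norm_num

end ResGraph

theorem stmt2 (G : ResGraph) (hG : G.Connected) (μ : G.E → ℝ) (hμ : ∀ e : G.E, 0 < μ e)
    (k l : G.V) (v : G.V → ℝ)
    (hv : G.lap μ v = fun x => (if x = k then (1 : ℝ) else 0) - (if x = l then 1 else 0))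
    (e : G.E) (i j : G.V) (he : G.ends e = s(i, j)) :
    (v i - v j) / μ e =
      (∑ T ∈ Finset.univ.filter (fun T : Finset G.E => G.IsSpanningTree ↑T),
          (∏ f ∈ Finset.univ \ T, μ f) * G.treeCurrent ↑T k l e i j) /
      (∑ T ∈ Finset.univ.filter (fun T : Finset G.E => G.IsSpanningTree ↑T),
          ∏ f ∈ Finset.univ \ T, μ f) ∧
    -1 ≤ (v i - v j) / μ e ∧ (v i - v j) / μ e ≤ 1 := by
  classical
  set 𝕋 := Finset.univ.filter (fun T : Finset G.E => G.IsSpanningTree ↑T) with h𝕋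
  set W := ∑ T ∈ 𝕋, ∏ f ∈ Finset.univ \ T, μ f with hW
  have hTne : 𝕋.Nonempty := by
    obtain ⟨T, hT⟩ := G.exists_spanning_tree hG
    exact ⟨T, Finset.mem_filter.2 ⟨Finset.mem_univ _, hT⟩⟩
  have hWpos : 0 < W :=
    Finset.sum_pos (fun T _ => Finset.prod_pos (fun f _ => hμ f)) hTne
  set u : G.V → ℝ := fun x =>
    ∑ F ∈ Finset.univ.filter (fun F : Finset G.E => G.CycleFree ↑F ∧
        (∀ z : G.V, G.Reach ↑F z k ∨ G.Reach ↑F z l) ∧ ¬ G.Reach ↑F k l),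
      (∏ f ∈ Finset.univ \ F, μ f) * (if G.Reach ↑F x k then (1 : ℝ) else 0) with hu
  have hdiff : ∀ (x y : G.V) (f : G.E), G.ends f = s(x, y) →
      u x - u y = μ f * ∑ T ∈ 𝕋,
        (∏ g ∈ Finset.univ \ T, μ g) * G.treeCurrent ↑T k l f x y := by
    intro x y f hf
    calc u x - u y
        = ∑ F ∈ Finset.univ.filter (fun F : Finset G.E => G.CycleFree ↑F ∧
              (∀ z : G.V, G.Reach ↑F z k ∨ G.Reach ↑F z l) ∧ ¬ G.Reach ↑F k l),
            ((∏ g ∈ Finset.univ \ F, μ g) *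
              ((if G.Reach ↑F x k then (1 : ℝ) else 0)
                - (if G.Reach ↑F y k then 1 else 0))) := by
          rw [hu]
          rw [← Finset.sum_sub_distrib]
          exact Finset.sum_congr rfl (fun F _ => by ring)
      _ = ∑ T ∈ 𝕋, (μ f * ((∏ g ∈ Finset.univ \ T, μ g) * G.treeCurrent ↑T k l f x y)) :=
          G.key_reindex μ hμ k l hf
      _ = μ f * ∑ T ∈ 𝕋, (∏ g ∈ Finset.univ \ T, μ g) * G.treeCurrent ↑T k l f x y := by
          rw [Finset.mul_sum]
  have hlapu : ∀ x : G.V, G.lap μ u x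
      = W * ((if x = k then (1 : ℝ) else 0) - (if x = l then 1 else 0)) := by
    intro x
    rw [ResGraph.lap_apply]
    have hterm : ∀ (y : G.V) (f : G.E),
        (if G.ends f = s(x, y) then (u x - u y) / μ f else 0)
          = ∑ T ∈ 𝕋, (if G.ends f = s(x, y) then
              (∏ g ∈ Finset.univ \ T, μ g) * G.treeCurrent ↑T k l f x y else 0) := by
      intro y f
      split_ifs with hc
      · rw [hdiff x y f hc, mul_comm, mul_div_assoc, div_self (ne_of_gt (hμ f)), mul_one]
      · rw [Finset.sum_const_zero]
    calc (∑ y : G.V, ∑ f : G.E, if G.ends f = s(x, y) then (u x - u y) / μ f else 0)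
        = ∑ y : G.V, ∑ f : G.E, ∑ T ∈ 𝕋, (if G.ends f = s(x, y) then
            (∏ g ∈ Finset.univ \ T, μ g) * G.treeCurrent ↑T k l f x y else 0) := by
          exact Finset.sum_congr rfl (fun y _ =>
            Finset.sum_congr rfl (fun f _ => hterm y f))
      _ = ∑ y : G.V, ∑ T ∈ 𝕋, ∑ f : G.E, (if G.ends f = s(x, y) then
            (∏ g ∈ Finset.univ \ T, μ g) * G.treeCurrent ↑T k l f x y else 0) := by
          exact Finset.sum_congr rfl (fun y _ => Finset.sum_comm)
      _ = ∑ T ∈ 𝕋, ∑ y : G.V, ∑ f : G.E, (if G.ends f = s(x, y) then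
            (∏ g ∈ Finset.univ \ T, μ g) * G.treeCurrent ↑T k l f x y else 0) :=
          Finset.sum_comm
      _ = ∑ T ∈ 𝕋, (∏ g ∈ Finset.univ \ T, μ g) * ∑ y : G.V, ∑ f : G.E,
            (if G.ends f = s(x, y) then G.treeCurrent ↑T k l f x y else 0) := by
          refine Finset.sum_congr rfl (fun T _ => ?_)
          rw [Finset.mul_sum]
          refine Finset.sum_congr rfl (fun y _ => ?_)
          rw [Finset.mul_sum]
          refine Finset.sum_congr rfl (fun f _ => ?_)
          split_ifs with hc
          · rfl
          · rw [mul_zero]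
      _ = ∑ T ∈ 𝕋, (∏ g ∈ Finset.univ \ T, μ g) *
            ((if x = k then (1 : ℝ) else 0) - (if x = l then 1 else 0)) := by
          refine Finset.sum_congr rfl (fun T hT => ?_)
          have hST : G.IsSpanningTree ↑T := (Finset.mem_filter.1 hT).2
          rw [G.node_law hST.1 hST.2 k l x]
      _ = W * ((if x = k then (1 : ℝ) else 0) - (if x = l then 1 else 0)) := by
          rw [hW, Finset.sum_mul]
  set v' : G.V → ℝ := fun x => W⁻¹ * u x with hv'
  have hlapv' : ∀ x : G.V, G.lap μ v' x
      = ((if x = k then (1 : ℝ) else 0) - (if x = l then 1 else 0)) := by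
    intro x
    rw [hv']
    rw [G.lap_smul μ W⁻¹ u x, hlapu x, ← mul_assoc, inv_mul_cancel₀ (ne_of_gt hWpos),
      one_mul]
  have hz : ∀ x : G.V, G.lap μ (fun y => v y - v' y) x = 0 := by
    intro x
    rw [G.lap_sub μ v v' x, hlapv' x]
    have := congrFun hv x
    rw [this]
    ring
  have huniq := G.lap_zero_const hG μ hμ hz i j
  have h2 : v i - v j = W⁻¹ * (u i - u j) := by
    have : v i - v' i = v j - v' j := huniq
    rw [hv'] at this
    dsimp only at this
    linarith
  set N := ∑ T ∈ 𝕋, (∏ f ∈ Finset.univ \ T, μ f) * G.treeCurrent ↑T k l e i j with hN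
  have hmain : (v i - v j) / μ e = N / W := by
    rw [h2, hdiff i j e he, ← hN]
    field_simp [(hμ e).ne', hWpos.ne']
  have habs : |N| ≤ W := by
    calc |N| ≤ ∑ T ∈ 𝕋, |(∏ f ∈ Finset.univ \ T, μ f) * G.treeCurrent ↑T k l e i j| :=
          Finset.abs_sum_le_sum_abs _ _
      _ ≤ ∑ T ∈ 𝕋, ∏ f ∈ Finset.univ \ T, μ f := by
          refine Finset.sum_le_sum (fun T _ => ?_)
          rw [abs_mul]
          have hp : 0 < ∏ f ∈ Finset.univ \ T, μ f :=
            Finset.prod_pos (fun f _ => hμ f)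
          rw [abs_of_pos hp]
          calc (∏ f ∈ Finset.univ \ T, μ f) * |G.treeCurrent ↑T k l e i j|
              ≤ (∏ f ∈ Finset.univ \ T, μ f) * 1 := by
                exact mul_le_mul_of_nonneg_left (G.treeCurrent_abs_le _ k l e i j)
                  (le_of_lt hp)
            _ = ∏ f ∈ Finset.univ \ T, μ f := mul_one _
      _ = W := hW.symm
  refine ⟨hmain, ?_, ?_⟩
  · rw [hmain]
    rw [le_div_iff₀ hWpos]
    have := (abs_le.1 habs).1
    linarith
  · rw [hmain]
    rw [div_le_one hWpos]
    exact (abs_le.1 habs).2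
end

section
/- (Jeans' Least Power Theorem) Let (Γ, μ) be a proper resistive network, let D ∈ ℝ^{Vert(Γ)}, and let I be an edge current assignment consistent with D. Then the following are equivalent: (i) there is a voltage assignment v ∈ ℝ^{Vert(Γ)} such that I(e : i → j) = (v_i − v_j)/μ(e) for every oriented edge e : i → j; (ii) I minimizes the power dissipated Σ_{e ∈ Ed(Γ)} μ(e) I(e)² among all edge current assignments consistent with D. -/
open Classical
open scoped BigOperators

/-- A graph: a finite set of vertices, a finite set of edges, and a map assigning to
each edge its unordered pair of endpoints (loops and parallel edges allowed). -/
structure RGraph where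
  V : Type
  E : Type
  [fintV : Fintype V]
  [decV : DecidableEq V]
  [fintE : Fintype E]
  [decE : DecidableEq E]
  ends : E → Sym2 V

attribute [instance] RGraph.fintV RGraph.decV RGraph.fintE RGraph.decE

namespace RGraph

variable (G : RGraph)

/-- The Laplacian of the resistive network `(G, μ)` applied to a voltage assignment `v`:
`(L v) i = Σ_j Σ_{edges e : i → j} (v i − v j) / μ e`. -/
noncomputable def lap (μ : G.E → ℝ) (v : G.V → ℝ) : G.V → ℝ := fun i =>
  ∑ j : G.V, ∑ e : G.E, if G.ends e = s(i, j) then (v i - v j) / μ e else 0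

/-- `i` and `j` are joined by an edge belonging to `F`. -/
def Adj (F : Set G.E) (i j : G.V) : Prop := ∃ e ∈ F, G.ends e = s(i, j)

/-- `i` and `j` lie in the same connected component of the subgraph `Γ|_F`
(the subgraph with all vertices of `Γ` and edge set `F`). -/
def Reach (F : Set G.E) (i j : G.V) : Prop := Relation.EqvGen (G.Adj F) i j

/-- The subgraph `Γ|_F` is connected. -/
def ConnOn (F : Set G.E) : Prop := ∀ i j : G.V, G.Reach F i j

/-- The graph `G` is connected. -/
def Connected : Prop := G.ConnOn Set.univ

/-- The set of connected components of the subgraph `Γ|_F`. -/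
def Comp (F : Set G.E) : Type := Quotient (Relation.EqvGen.setoid (G.Adj F))

/-- A walk from `i` to `j`: a finite sequence of vertices together with a choice of an
edge from each vertex to the next. -/
inductive Walk : G.V → G.V → Type
  | nil (i : G.V) : Walk i i
  | cons {i j k : G.V} (e : G.E) (he : G.ends e = s(i, j)) (w : Walk j k) : Walk i k

namespace Walk

variable {G}

/-- The list of vertices visited by a walk, in order (starting vertex first). -/
def vertices : ∀ {i j : G.V}, G.Walk i j → List G.V
  | _, _, .nil a => [a]
  | _, _, @Walk.cons _ a _ _ _ _ w => a :: vertices w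

/-- The list of edges traversed by a walk, in order. -/
def edges : ∀ {i j : G.V}, G.Walk i j → List G.E
  | _, _, .nil _ => []
  | _, _, .cons e _ w => e :: edges w

/-- The list of steps `(source, edge, target)` of a walk. -/
def steps : ∀ {i j : G.V}, G.Walk i j → List (G.V × G.E × G.V)
  | _, _, .nil _ => []
  | _, _, @Walk.cons _ a b _ e _ w => (a, e, b) :: steps w

/-- All edges of the walk lie in the edge set `F`. -/
def In {i j : G.V} (w : G.Walk i j) (F : Set G.E) : Prop := ∀ e ∈ w.edges, e ∈ F

/-- A path: a walk all of whose vertices are distinct, except possibly the start and the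
end vertex (and which does not traverse any edge twice). -/
def IsPath {i j : G.V} (w : G.Walk i j) : Prop :=
  w.vertices.dropLast.Nodup ∧ w.vertices.tail.Nodup ∧ w.edges.Nodup

/-- Change the (definitionally equal) endpoints of a walk. -/
def copy : ∀ {i j i' j' : G.V}, G.Walk i j → i = i' → j = j' → G.Walk i' j'
  | _, _, _, _, w, rfl, rfl => w

variable (G)

end Walk

/-- `F` is cycle-free: the subgraph `Γ|_F` contains no cycle, i.e. every closed path
with edges in `F` is trivial. -/
def CycleFree (F : Set G.E) : Prop :=
  ∀ (i : G.V) (w : G.Walk i i), w.In F → w.IsPath → w.edges = []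

/-- `T` is a spanning tree of `G`: the subgraph `Γ|_T` is connected and cycle-free. -/
def IsSpanningTree (T : Set G.E) : Prop := G.ConnOn T ∧ G.CycleFree T

/-- `F` is a 2-forest: `Γ|_F` is cycle-free with exactly two connected components. -/
def IsTwoForest (F : Set G.E) : Prop := G.CycleFree F ∧ Nat.card (G.Comp F) = 2

/-- `M` is a maximal forest of the subgraph `Γ|_S`: it is a cycle-free subset of `S`
containing a spanning tree of each connected component of `Γ|_S` (equivalently,
inducing the same connected components as `S`). -/
def IsMaxForestOf (M S : Set G.E) : Prop :=
  M ⊆ S ∧ G.CycleFree M ∧ ∀ i j : G.V, G.Reach S i j ↔ G.Reach M i j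

/-- The sign `σ(i,j;k,ℓ;F)` attached to a 2-forest `F`: `+1` if one component of `Γ|_F`
contains `i` and `k` and the other contains `j` and `ℓ`; `-1` if one component contains
`i` and `ℓ` and the other contains `j` and `k`; `0` otherwise. -/
noncomputable def sigma2 (F : Set G.E) (i j k l : G.V) : ℝ :=
  if ¬ G.Reach F i j ∧ G.Reach F i k ∧ G.Reach F j l then 1
  else if ¬ G.Reach F i j ∧ G.Reach F i l ∧ G.Reach F j k then -1
  else 0

end RGraph

namespace RGraph

variable (G : RGraph)

/-- An oriented edge: an edge together with an ordering of its endpoints. -/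
def OEdge : Type := {x : G.E × G.V × G.V // G.ends x.1 = s(x.2.1, x.2.2)}

noncomputable instance : Fintype G.OEdge := Subtype.fintype _

namespace OEdge

variable {G}

/-- The underlying edge of an oriented edge. -/
def edge (o : G.OEdge) : G.E := o.1.1

/-- The source of an oriented edge. -/
def src (o : G.OEdge) : G.V := o.1.2.1

/-- The target of an oriented edge. -/
def tgt (o : G.OEdge) : G.V := o.1.2.2

/-- The reversal of an oriented edge. -/
def rev (o : G.OEdge) : G.OEdge := ⟨(o.1.1, o.1.2.2, o.1.2.1), o.2.trans Sym2.eq_swap⟩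

end OEdge

/-- An edge current assignment: a real-valued function on oriented edges with
`I(e : i → j) = −I(e : j → i)`. -/
def IsCurrent (I : G.OEdge → ℝ) : Prop := ∀ o : G.OEdge, I o.rev = - I o

/-- The edge current assignment `I` is consistent with the vertex current assignment `D`:
for every vertex `i`, `Σ_j Σ_{edges e : i → j} I(e : i → j) = D i`. -/
def Consistent (I : G.OEdge → ℝ) (D : G.V → ℝ) : Prop :=
  ∀ x : G.V, (∑ o ∈ Finset.univ.filter (fun o : G.OEdge => o.src = x), I o) = D x

lemma exists_oedge (e : G.E) : ∃ o : G.OEdge, o.edge = e := by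
  have h : ∀ z : Sym2 G.V, G.ends e = z → ∃ o : G.OEdge, o.edge = e := by
    refine Sym2.ind (fun a b h => ?_)
    exact ⟨⟨(e, a, b), h⟩, rfl⟩
  exact h (G.ends e) rfl

/-- A choice of orientation for each edge. -/
noncomputable def orient (e : G.E) : G.OEdge := Classical.choose (G.exists_oedge e)

lemma orient_edge (e : G.E) : (G.orient e).edge = e := Classical.choose_spec (G.exists_oedge e)

/-- The power dissipated by an edge current assignment: `Σ_{e ∈ Ed(Γ)} μ(e) I(e)²`. -/
noncomputable def power (μ : G.E → ℝ) (I : G.OEdge → ℝ) : ℝ :=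
  ∑ e : G.E, μ e * (I (G.orient e)) ^ 2

/-- The Green's function `g(Γ, μ; D, E) = Dᵀ v` for any `v` with `L v = E`
(for `Γ` connected, `μ` proper, and `D`, `E` zero-sum vectors, such a `v` exists and
`Dᵀ v` does not depend on the choice). -/
noncomputable def green (μ : G.E → ℝ) (D E : G.V → ℝ) : ℝ :=
  if h : ∃ v : G.V → ℝ, G.lap μ v = E then ∑ x : G.V, D x * Classical.choose h x else 0

/-- The contracted graph `Γ/S`: identify the two endpoints of each edge in `S` and
delete the edges in `S`. -/
noncomputable def contract (S : Set G.E) : RGraph :=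
  letI : DecidableEq (Quotient (Relation.EqvGen.setoid (G.Adj S))) := Classical.decEq _
  letI : DecidablePred (· ∈ S) := Classical.decPred _
  { V := Quotient (Relation.EqvGen.setoid (G.Adj S))
    E := {e : G.E // e ∉ S}
    ends := fun e => (G.ends e.1).map (Quotient.mk (Relation.EqvGen.setoid (G.Adj S))) }

/-- The quotient map `[·] : Vert(Γ) → Vert(Γ/S)`. -/
noncomputable def cmk (S : Set G.E) (x : G.V) : (G.contract S).V :=
  Quotient.mk (Relation.EqvGen.setoid (G.Adj S)) x

/-- The edge of `Γ` underlying an edge of `Γ/S` (recall `Ed(Γ/S) = Ed(Γ)∖S`). -/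
noncomputable def cval (S : Set G.E) (e : (G.contract S).E) : G.E := e.1

/-- The subset of `Ed(Γ/S) = Ed(Γ)∖S` induced by a subset `F ⊆ Ed(Γ)`, namely `F∖S`. -/
noncomputable def cset (S : Set G.E) (F : Set G.E) : Set (G.contract S).E :=
  {e : (G.contract S).E | G.cval S e ∈ F}

/-- The linear map `[·] : ℝ^{Vert(Γ)} → ℝ^{Vert(Γ/S)}` sending the basis vector `e_i`
to `e_{[i]}`. -/
noncomputable def pushVec (S : Set G.E) (D : G.V → ℝ) : (G.contract S).V → ℝ := fun x =>
  ∑ i ∈ Finset.univ.filter (fun i : G.V => G.cmk S i = x), D i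

/-- Contraction of walks: delete from a walk in `Γ` the edges belonging to `S`,
obtaining a walk in `Γ/S`. -/
noncomputable def contractWalk (S : Set G.E) :
    ∀ {i j : G.V}, G.Walk i j → (G.contract S).Walk (G.cmk S i) (G.cmk S j)
  | _, _, .nil a => .nil (G.cmk S a)
  | _, _, @Walk.cons _ a b _ e he w =>
    if hS : e ∈ S then
      (contractWalk S w).copy
        (Quotient.sound (Relation.EqvGen.rel b a ⟨e, hS, he.trans Sym2.eq_swap⟩)) rfl
    else
      Walk.cons (j := G.cmk S b) ⟨e, hS⟩
        (by show Sym2.map _ (G.ends e) = s(G.cmk S a, G.cmk S b)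
            rw [he]
            exact Sym2.map_pair_eq _ a b) (contractWalk S w)

/-- The current `I_{Γ|_T}(e : i → j)` flowing along the oriented edge `e : i → j` when a
unit current from `k` to `ℓ` is imposed on the spanning tree `Γ|_T`: it is `+1` if `e ∈ T`
and the unique path in `Γ|_T` from `k` to `ℓ` traverses `e` from `i` to `j`, `−1` if it
traverses `e` from `j` to `i`, and `0` otherwise. -/
noncomputable def treeCurrent (T : Set G.E) (k l : G.V) (e : G.E) (i j : G.V) : ℝ :=
  if e ∈ T ∧ ∃ w : G.Walk k l, w.IsPath ∧ w.In T ∧ (i, e, j) ∈ w.steps then 1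
  else if e ∈ T ∧ ∃ w : G.Walk k l, w.IsPath ∧ w.In T ∧ (j, e, i) ∈ w.steps then -1
  else 0

/-- The extended Green's function on possibly improper resistances: contract the edges of
zero resistance and take the Green's function of the resulting proper network, with the
pushed-forward vertex vectors. -/
noncomputable def egreen (μ : G.E → ℝ) (D E : G.V → ℝ) : ℝ :=
  (G.contract {e : G.E | μ e = 0}).green (fun e => μ (G.cval {e : G.E | μ e = 0} e))
    (G.pushVec {e : G.E | μ e = 0} D) (G.pushVec {e : G.E | μ e = 0} E)

end RGraph

namespace RGraph

variable {G : RGraph}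

namespace OEdge

lemma rev_rev (o : G.OEdge) : o.rev.rev = o := rfl

@[simp] lemma rev_edge (o : G.OEdge) : o.rev.edge = o.edge := rfl
@[simp] lemma rev_src (o : G.OEdge) : o.rev.src = o.tgt := rfl
@[simp] lemma rev_tgt (o : G.OEdge) : o.rev.tgt = o.src := rfl

lemma ends_eq (o : G.OEdge) : G.ends o.edge = s(o.src, o.tgt) := o.2

lemma ext' {o o' : G.OEdge} (h1 : o.edge = o'.edge) (h2 : o.src = o'.src)
    (h3 : o.tgt = o'.tgt) : o = o' :=
  Subtype.ext (Prod.ext h1 (Prod.ext h2 h3))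

lemma rev_eq_comm {o x : G.OEdge} : o.rev = x ↔ o = x.rev := by
  constructor
  · rintro rfl; exact (rev_rev o).symm
  · rintro rfl; exact rev_rev x

lemma eq_or_eq_rev {o x : G.OEdge} (h : o.edge = x.edge) : o = x ∨ o = x.rev := by
  have hs : s(o.src, o.tgt) = s(x.src, x.tgt) := by
    rw [← o.ends_eq, ← x.ends_eq, h]
  rcases Sym2.eq_iff.mp hs with ⟨h1, h2⟩ | ⟨h1, h2⟩
  · exact Or.inl (ext' h h1 h2)
  · exact Or.inr (ext' h h1 h2)

end OEdge

namespace Walk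

def append : ∀ {i j k : G.V}, G.Walk i j → G.Walk j k → G.Walk i k
  | _, _, _, .nil _, w => w
  | _, _, _, .cons e he w, w' => .cons e he (append w w')

def reverse : ∀ {i j : G.V}, G.Walk i j → G.Walk j i
  | _, _, .nil a => .nil a
  | _, _, @Walk.cons _ a _ _ e he w =>
      (reverse w).append (.cons e (he.trans Sym2.eq_swap) (.nil a))

/-- The oriented-edge sum of `f` along a walk. -/
noncomputable def wsum (f : G.OEdge → ℝ) : ∀ {i j : G.V}, G.Walk i j → ℝ
  | _, _, .nil _ => 0
  | _, _, @Walk.cons _ a b _ e he w => f ⟨(e, a, b), he⟩ + wsum f w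

lemma wsum_append (f : G.OEdge → ℝ) : ∀ {i j k : G.V} (w : G.Walk i j) (w' : G.Walk j k),
    wsum f (w.append w') = wsum f w + wsum f w'
  | _, _, _, .nil _, w' => by simp [append, wsum]
  | _, _, _, .cons e he w, w' => by
      simp [append, wsum, wsum_append f w w']; ring

lemma wsum_reverse (f : G.OEdge → ℝ) (hf : ∀ o : G.OEdge, f o.rev = - f o) :
    ∀ {i j : G.V} (w : G.Walk i j), wsum f w.reverse = - wsum f w
  | _, _, .nil _ => by simp [reverse, wsum]
  | _, _, @Walk.cons _ a b _ e he w => by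
      have h := hf ⟨(e, a, b), he⟩
      simp only [reverse, wsum, wsum_append f, wsum_reverse f hf w]
      simp only [OEdge.rev] at h
      rw [h]; ring

lemma wsum_copy (f : G.OEdge → ℝ) {i j i' j' : G.V} (w : G.Walk i j) (h1 : i = i')
    (h2 : j = j') : wsum f (w.copy h1 h2) = wsum f w := by
  subst h1; subst h2; rfl

end Walk

/-- The elementary current along an oriented edge. -/
noncomputable def chi (x : G.OEdge) (o : G.OEdge) : ℝ :=
  (if o = x then 1 else 0) - (if o = x.rev then 1 else 0)

lemma chi_rev (x o : G.OEdge) : chi x o.rev = - chi x o := by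
  unfold chi
  rw [show (o.rev = x) = (o = x.rev) from propext OEdge.rev_eq_comm,
    show (o.rev = x.rev) = (o = x) from propext (by
      constructor
      · intro h; have := congrArg OEdge.rev h; rwa [OEdge.rev_rev, OEdge.rev_rev] at this
      · rintro rfl; rfl)]
  ring

lemma div_chi (x : G.OEdge) (y : G.V) :
    (∑ o ∈ Finset.univ.filter (fun o : G.OEdge => o.src = y), chi x o) =
      (if x.src = y then (1:ℝ) else 0) - (if x.tgt = y then (1:ℝ) else 0) := by
  unfold chi
  rw [Finset.sum_sub_distrib]
  rw [Finset.sum_ite_eq' _ x (fun _ => (1:ℝ)), Finset.sum_ite_eq' _ x.rev (fun _ => (1:ℝ))]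
  simp [Finset.mem_filter]

/-- The current induced by a walk. -/
noncomputable def wcur : ∀ {i j : G.V}, G.Walk i j → G.OEdge → ℝ
  | _, _, .nil _ => fun _ => 0
  | _, _, @Walk.cons _ a b _ e he w => fun o => chi ⟨(e, a, b), he⟩ o + wcur w o

lemma wcur_isCurrent : ∀ {i j : G.V} (w : G.Walk i j) (o : G.OEdge),
    wcur w o.rev = - wcur w o
  | _, _, .nil _, o => by simp [wcur]
  | _, _, @Walk.cons _ a b _ e he w, o => by
      simp [wcur, chi_rev, wcur_isCurrent w o]
      linarith [chi_rev (⟨(e, a, b), he⟩ : G.OEdge) o]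

lemma div_wcur : ∀ {i j : G.V} (w : G.Walk i j) (y : G.V),
    (∑ o ∈ Finset.univ.filter (fun o : G.OEdge => o.src = y), wcur w o) =
      (if i = y then (1:ℝ) else 0) - (if j = y then (1:ℝ) else 0)
  | _, _, .nil _, y => by simp [wcur]
  | _, _, @Walk.cons _ a b _ e he w, y => by
      have h := div_chi (⟨(e, a, b), he⟩ : G.OEdge) y
      simp only [wcur, Finset.sum_add_distrib, div_wcur w y]
      simp only [OEdge.src, OEdge.tgt] at h ⊢
      erw [h]
      by_cases ha : a = y <;> by_cases hb : b = y <;> simp [ha, hb] <;> ring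

/-- The energy pairing. -/
noncomputable def Bform (G : RGraph) (μ : G.E → ℝ) (I J : G.OEdge → ℝ) : ℝ :=
  ∑ e : G.E, μ e * I (G.orient e) * J (G.orient e)

lemma Bform_chi (μ : G.E → ℝ) (I : G.OEdge → ℝ) (hI : G.IsCurrent I) (x : G.OEdge) :
    G.Bform μ I (chi x) = μ x.edge * I x := by
  unfold Bform
  rw [Finset.sum_eq_single x.edge]
  · have ho : (G.orient x.edge).edge = x.edge := G.orient_edge x.edge
    rcases OEdge.eq_or_eq_rev ho with h | h
    · rw [h]
      by_cases hx : x = x.rev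
      · have h0 : I x = 0 := by
          have := hI x; rw [← hx] at this; linarith
        rw [h0, chi, if_pos rfl, if_pos hx]; ring
      · rw [chi, if_pos rfl, if_neg hx]; ring
    · rw [h]
      by_cases hx : x.rev = x
      · have h0 : I x = 0 := by
          have := hI x; rw [hx] at this; linarith
        rw [hx, h0, chi, if_pos rfl, if_pos hx.symm]; ring
      · have hIr := hI x
        rw [chi, if_neg hx, if_pos rfl, hIr]; ring
  · intro e _ hne
    have h1 : G.orient e ≠ x := fun h => hne (by rw [← G.orient_edge e, h])
    have h2 : G.orient e ≠ x.rev := fun h => hne (by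
      have := congrArg OEdge.edge h
      rwa [G.orient_edge e, OEdge.rev_edge] at this)
    rw [chi, if_neg h1, if_neg h2]; ring
  · intro h; exact absurd (Finset.mem_univ _) h

lemma Bform_wcur (μ : G.E → ℝ) (I : G.OEdge → ℝ) (hI : G.IsCurrent I) :
    ∀ {i j : G.V} (w : G.Walk i j),
      G.Bform μ I (wcur w) = Walk.wsum (fun o => μ o.edge * I o) w
  | _, _, .nil _ => by simp [Bform, wcur, Walk.wsum]
  | _, _, @Walk.cons _ a b _ e he w => by
      have hw : wcur (Walk.cons e he w) = fun o => chi ⟨(e, a, b), he⟩ o + wcur w o := rfl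
      have : G.Bform μ I (wcur (Walk.cons e he w)) =
          G.Bform μ I (chi ⟨(e, a, b), he⟩) + G.Bform μ I (wcur w) := by
        unfold Bform
        rw [hw, ← Finset.sum_add_distrib]
        apply Finset.sum_congr rfl; intro x _; ring
      have hc := Bform_chi μ I hI (⟨(e, a, b), he⟩ : G.OEdge)
      rw [this, Bform_wcur μ I hI w, Walk.wsum]
      exact congrArg (· + Walk.wsum (fun o => μ o.edge * I o) w) hc

/-- Walk-connectivity as a setoid. -/
def wSetoid (G : RGraph) : Setoid G.V :=
  ⟨fun i j => Nonempty (G.Walk i j),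
    ⟨fun i => ⟨.nil i⟩, fun ⟨w⟩ => ⟨w.reverse⟩, fun ⟨w⟩ ⟨w'⟩ => ⟨w.append w'⟩⟩⟩

noncomputable def wrep (G : RGraph) (j : G.V) : G.V :=
  @Quotient.out _ G.wSetoid (@Quotient.mk _ G.wSetoid j)

noncomputable def wrepWalk (G : RGraph) (j : G.V) : G.Walk (G.wrep j) j :=
  (@Quotient.mk_out _ G.wSetoid j).some

/-- The potential associated to an edge function with vanishing closed-walk sums. -/
noncomputable def pot (G : RGraph) (f : G.OEdge → ℝ) (j : G.V) : ℝ :=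
  Walk.wsum f (G.wrepWalk j)

lemma wsum_eq_pot_sub (f : G.OEdge → ℝ) (hf : ∀ o : G.OEdge, f o.rev = - f o)
    (hclosed : ∀ (a : G.V) (w : G.Walk a a), Walk.wsum f w = 0)
    {a b : G.V} (w : G.Walk a b) :
    Walk.wsum f w = G.pot f b - G.pot f a := by
  have hr : G.wrep a = G.wrep b := by
    unfold wrep
    rw [@Quotient.sound _ G.wSetoid a b ⟨w⟩]
  have h0 := hclosed b
    (((G.wrepWalk b).reverse).append (((G.wrepWalk a).append w).copy hr rfl))
  rw [Walk.wsum_append, Walk.wsum_reverse f hf, Walk.wsum_copy, Walk.wsum_append] at h0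
  unfold pot
  linarith

end RGraph
namespace RGraph

variable {G : RGraph}

lemma power_add (μ : G.E → ℝ) (I J : G.OEdge → ℝ) :
    G.power μ (fun o => I o + J o) =
      G.power μ I + 2 * G.Bform μ I J + G.power μ J := by
  unfold power Bform
  rw [Finset.sum_congr rfl (fun e (_ : e ∈ Finset.univ) =>
    show μ e * ((fun o => I o + J o) (G.orient e)) ^ 2 =
      μ e * I (G.orient e) ^ 2 + 2 * (μ e * I (G.orient e) * J (G.orient e)) +
        μ e * J (G.orient e) ^ 2 from by ring)]
  rw [Finset.sum_add_distrib, Finset.sum_add_distrib, ← Finset.mul_sum]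

lemma Bform_smul (μ : G.E → ℝ) (I J : G.OEdge → ℝ) (t : ℝ) :
    G.Bform μ I (fun o => t * J o) = t * G.Bform μ I J := by
  unfold Bform
  rw [Finset.mul_sum]
  exact Finset.sum_congr rfl fun e _ => by ring

lemma power_smul (μ : G.E → ℝ) (J : G.OEdge → ℝ) (t : ℝ) :
    G.power μ (fun o => t * J o) = t ^ 2 * G.power μ J := by
  unfold power
  rw [Finset.mul_sum]
  exact Finset.sum_congr rfl fun e _ => by ring

lemma power_nonneg (μ : G.E → ℝ) (hμ : ∀ e : G.E, 0 < μ e) (J : G.OEdge → ℝ) :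
    0 ≤ G.power μ J :=
  Finset.sum_nonneg fun e _ => mul_nonneg (hμ e).le (sq_nonneg _)

/-- The energy pairing of a current against a divergence-free current vanishes when the
first current comes from a potential. -/
lemma Bform_eq_zero (μ : G.E → ℝ) (hμ : ∀ e : G.E, 0 < μ e) (v : G.V → ℝ)
    (I : G.OEdge → ℝ) (hv : ∀ o : G.OEdge, I o = (v o.src - v o.tgt) / μ o.edge)
    (J : G.OEdge → ℝ) (hJc : ∀ o : G.OEdge, J o.rev = - J o)
    (hJ0 : ∀ x : G.V, (∑ o ∈ Finset.univ.filter (fun o : G.OEdge => o.src = x), J o) = 0) :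
    G.Bform μ I J = 0 := by
  have step1 : G.Bform μ I J =
      ∑ e : G.E, (v (G.orient e).src - v (G.orient e).tgt) * J (G.orient e) := by
    unfold Bform
    refine Finset.sum_congr rfl fun e _ => ?_
    rw [hv (G.orient e), G.orient_edge e]
    have hne := (hμ e).ne'
    field_simp
  have step2 : ∀ e : G.E,
      (v (G.orient e).src - v (G.orient e).tgt) * J (G.orient e) =
        ∑ o ∈ Finset.univ.filter (fun o : G.OEdge => o.edge = e), v o.src * J o := by
    intro e
    have h₀ : (G.orient e).edge = e := G.orient_edge e
    by_cases hloop : (G.orient e).rev = G.orient e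
    · have hJ0e : J (G.orient e) = 0 := by
        have := hJc (G.orient e); rw [hloop] at this; linarith
      have hfil : Finset.univ.filter (fun o : G.OEdge => o.edge = e) = {G.orient e} := by
        ext o
        simp only [Finset.mem_filter, Finset.mem_univ, true_and, Finset.mem_singleton]
        constructor
        · intro h
          rcases OEdge.eq_or_eq_rev (h.trans h₀.symm) with h' | h'
          · exact h'
          · rw [h', hloop]
        · rintro rfl; exact h₀
      rw [hfil, Finset.sum_singleton, hJ0e]; ring
    · have hfil : Finset.univ.filter (fun o : G.OEdge => o.edge = e) =
          {G.orient e, (G.orient e).rev} := by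
        ext o
        simp only [Finset.mem_filter, Finset.mem_univ, true_and, Finset.mem_insert,
          Finset.mem_singleton]
        constructor
        · intro h; exact OEdge.eq_or_eq_rev (h.trans h₀.symm)
        · rintro (rfl | rfl)
          · exact h₀
          · rw [OEdge.rev_edge]; exact h₀
      rw [hfil, Finset.sum_pair (Ne.symm hloop)]
      rw [OEdge.rev_src, hJc]
      ring
  rw [step1, Finset.sum_congr rfl fun e _ => step2 e,
    Finset.sum_fiberwise Finset.univ (fun o : G.OEdge => o.edge) (fun o => v o.src * J o),
    ← Finset.sum_fiberwise Finset.univ (fun o : G.OEdge => o.src) (fun o => v o.src * J o)]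
  refine Finset.sum_eq_zero fun x _ => ?_
  have : ∀ o ∈ Finset.univ.filter (fun o : G.OEdge => o.src = x),
      v o.src * J o = v x * J o := fun o ho => by
    rw [(Finset.mem_filter.mp ho).2]
  rw [Finset.sum_congr rfl this, ← Finset.mul_sum, hJ0 x, mul_zero]

end RGraph
/-- Jeans' Least Power Theorem -/
theorem stmt4 (G : RGraph) (μ : G.E → ℝ) (hμ : ∀ e : G.E, 0 < μ e) (D : G.V → ℝ)
    (I : G.OEdge → ℝ) (hI : G.IsCurrent I) (hID : G.Consistent I D) :
    (∃ v : G.V → ℝ, ∀ o : G.OEdge, I o = (v o.src - v o.tgt) / μ o.edge) ↔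
    (∀ I' : G.OEdge → ℝ, G.IsCurrent I' → G.Consistent I' D →
      G.power μ I ≤ G.power μ I') := by
  constructor
  · rintro ⟨v, hv⟩ I' hI' hID'
    set J : G.OEdge → ℝ := fun o => I' o - I o with hJ
    have hJc : ∀ o : G.OEdge, J o.rev = - J o := fun o => by
      simp only [hJ, hI o, hI' o]; ring
    have hJ0 : ∀ x : G.V,
        (∑ o ∈ Finset.univ.filter (fun o : G.OEdge => o.src = x), J o) = 0 := by
      intro x
      simp only [hJ]
      rw [Finset.sum_sub_distrib, hID' x, hID x]; ring
    have key : G.Bform μ I J = 0 := G.Bform_eq_zero μ hμ v I hv J hJc hJ0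
    have hII' : I' = fun o => I o + J o := by funext o; simp [hJ]
    rw [hII', G.power_add μ I J, key]
    have := G.power_nonneg μ hμ J
    linarith
  · intro hmin
    have hB : ∀ J : G.OEdge → ℝ, (∀ o : G.OEdge, J o.rev = - J o) →
        (∀ x : G.V, (∑ o ∈ Finset.univ.filter (fun o : G.OEdge => o.src = x), J o) = 0) →
        G.Bform μ I J = 0 := by
      intro J hJc hJ0
      set b := G.power μ J with hb'
      set c := G.Bform μ I J with hc'
      have hq : ∀ t : ℝ, 0 ≤ 2 * t * c + t ^ 2 * b := by
        intro t
        have hcur : G.IsCurrent (fun o => I o + t * J o) := by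
          intro o; simp only [hI o, hJc o]; ring
        have hcons : G.Consistent (fun o => I o + t * J o) D := by
          intro x
          rw [Finset.sum_add_distrib, hID x, ← Finset.mul_sum, hJ0 x]; ring
        have hle := hmin _ hcur hcons
        have hexp : G.power μ (fun o => I o + t * J o) =
            G.power μ I + 2 * (t * c) + t ^ 2 * b := by
          rw [G.power_add μ I (fun o => t * J o), G.Bform_smul, G.power_smul, hb', hc']
        rw [hexp] at hle
        linarith
      have hbpos : 0 ≤ b := G.power_nonneg μ hμ J
      have hb1 : (0:ℝ) < b + 1 := by linarith
      have h := hq (-c / (b + 1))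
      have hkey : 2 * (-c / (b + 1)) * c + (-c / (b + 1)) ^ 2 * b =
          -(c ^ 2 * (b + 2)) / (b + 1) ^ 2 := by
        field_simp; ring
      rw [hkey, le_div_iff₀ (by positivity)] at h
      have h2 : c ^ 2 ≤ 0 := by nlinarith
      have h3 : c ^ 2 = 0 := le_antisymm h2 (sq_nonneg c)
      exact pow_eq_zero_iff (two_ne_zero) |>.mp h3
    set f : G.OEdge → ℝ := fun o => μ o.edge * I o with hf'
    have hf : ∀ o : G.OEdge, f o.rev = - f o := fun o => by
      simp only [hf', RGraph.OEdge.rev_edge, hI o]; ring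
    have hcl : ∀ (a : G.V) (w : G.Walk a a), RGraph.Walk.wsum f w = 0 := by
      intro a w
      rw [← RGraph.Bform_wcur μ I hI w]
      refine hB (RGraph.wcur w) (fun o => RGraph.wcur_isCurrent w o) fun x => ?_
      rw [RGraph.div_wcur w x]; ring
    refine ⟨fun x => - G.pot f x, fun o => ?_⟩
    have hstep := RGraph.wsum_eq_pot_sub f hf hcl
      (RGraph.Walk.cons (i := o.src) (j := o.tgt) o.edge o.ends_eq (RGraph.Walk.nil o.tgt))
    have hws : RGraph.Walk.wsum f
        (RGraph.Walk.cons (i := o.src) (j := o.tgt) o.edge o.ends_eq (RGraph.Walk.nil o.tgt)) =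
        f o := by
      show f ⟨(o.edge, o.src, o.tgt), o.ends_eq⟩ + 0 = f o
      rw [add_zero]
      exact congrArg f (Subtype.ext rfl)
    rw [hws] at hstep
    have hμo := (hμ o.edge).ne'
    rw [eq_div_iff hμo]
    show I o * μ o.edge = -G.pot f o.src - -G.pot f o.tgt
    have hfo : f o = μ o.edge * I o := rfl
    linarith [hstep, hfo]
end

section
/- Let (Γ, μ) be a proper resistive network with Γ connected and let D ∈ ℝ^{Vert(Γ)} be a zero-sum vector. Then g(Γ, μ; D, D) equals the minimum of the power dissipated Σ_{e ∈ Ed(Γ)} μ(e) I(e)² over all edge current assignments I consistent with D; moreover this minimum is attained by I(e : i → j) = (v_i − v_j)/μ(e) for any v with Lv = D. -/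
open Classical
open scoped BigOperators

namespace ResGraph

variable {G : ResGraph}

lemma orient_ends (e : G.E) : G.ends e = s((G.orient e).src, (G.orient e).tgt) := by
  have h := (G.orient e).2
  have he : (G.orient e).1.1 = e := G.orient_edge e
  rw [he] at h
  exact h

lemma rev_edge (o : G.OEdge) : o.rev.edge = o.edge := rfl
lemma rev_src (o : G.OEdge) : o.rev.src = o.tgt := rfl
lemma rev_tgt (o : G.OEdge) : o.rev.tgt = o.src := rfl

lemma oedge_cases {e : G.E} (o : G.OEdge) (h : o.edge = e) :
    o = G.orient e ∨ o = (G.orient e).rev := by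
  have h1 : s(o.src, o.tgt) = s((G.orient e).src, (G.orient e).tgt) := by
    rw [← G.orient_ends e, ← h]
    exact o.2.symm
  rcases Sym2.eq_iff.mp h1 with ⟨h2, h3⟩ | ⟨h2, h3⟩
  · left
    apply Subtype.ext
    have he : o.1.1 = (G.orient e).1.1 := h.trans (G.orient_edge e).symm
    exact Prod.ext he (Prod.ext h2 h3)
  · right
    apply Subtype.ext
    have he : o.1.1 = (G.orient e).rev.1.1 := h.trans (G.orient_edge e).symm
    exact Prod.ext he (Prod.ext h2 h3)

lemma rev_eq_self {o : G.OEdge} (h : o.src = o.tgt) : o.rev = o := by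
  apply Subtype.ext
  exact Prod.ext rfl (Prod.ext h.symm h)

lemma current_loop_zero {f : G.OEdge → ℝ} (hf : G.IsCurrent f) {o : G.OEdge}
    (h : o.src = o.tgt) : f o = 0 := by
  have := hf o
  rw [rev_eq_self h] at this
  linarith

/-- Sum over oriented edges, grouped by underlying edge, for a current. -/
lemma sum_oedge_eq_sum_edge {f : G.OEdge → ℝ} (hf : G.IsCurrent f) (g : G.V → ℝ) :
    ∑ o : G.OEdge, g o.src * f o
      = ∑ e : G.E, (g (G.orient e).src - g (G.orient e).tgt) * f (G.orient e) := by
  rw [← Finset.sum_fiberwise Finset.univ (fun o : G.OEdge => o.edge)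
      (fun o => g o.src * f o)]
  refine Finset.sum_congr rfl (fun e _ => ?_)
  by_cases hl : (G.orient e).src = (G.orient e).tgt
  · have hfz : f (G.orient e) = 0 := current_loop_zero hf hl
    have hfil : Finset.univ.filter (fun o : G.OEdge => o.edge = e) = {G.orient e} := by
      ext o
      simp only [Finset.mem_filter, Finset.mem_univ, true_and, Finset.mem_singleton]
      constructor
      · intro h
        rcases oedge_cases o h with h' | h'
        · exact h'
        · rw [h', rev_eq_self hl]
      · rintro rfl
        exact G.orient_edge e
    rw [hfil, Finset.sum_singleton, hfz]
    ring
  · have hne : G.orient e ≠ (G.orient e).rev := by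
      intro h
      exact hl (congrArg OEdge.src h ▸ (rev_src (G.orient e)) ▸ rfl)
    have hfil : Finset.univ.filter (fun o : G.OEdge => o.edge = e)
        = {G.orient e, (G.orient e).rev} := by
      ext o
      simp only [Finset.mem_filter, Finset.mem_univ, true_and, Finset.mem_insert,
        Finset.mem_singleton]
      constructor
      · intro h
        exact oedge_cases o h
      · rintro (rfl | rfl)
        · exact G.orient_edge e
        · exact G.orient_edge e
    rw [hfil, Finset.sum_pair hne, rev_src, hf (G.orient e)]
    ring

/-- Sum over oriented edges with given source, as a double sum over vertices and edges. -/
lemma sum_src_eq (x : G.V) (F : G.E → G.V → ℝ) :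
    ∑ o ∈ Finset.univ.filter (fun o : G.OEdge => o.src = x), F o.edge o.tgt
      = ∑ j : G.V, ∑ e : G.E, if G.ends e = s(x, j) then F e j else 0 := by
  rw [← Finset.sum_product' (f := fun (j : G.V) (e : G.E) =>
    if G.ends e = s(x, j) then F e j else 0)]
  rw [← Finset.sum_filter]
  refine Finset.sum_bij (fun o _ => (o.tgt, o.edge)) ?_ ?_ ?_ ?_
  · intro o ho
    simp only [Finset.mem_filter, Finset.mem_univ, true_and] at ho
    rw [Finset.mem_filter, Finset.mem_product]
    refine ⟨⟨Finset.mem_univ _, Finset.mem_univ _⟩, ?_⟩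
    show G.ends o.edge = s(x, o.tgt)
    rw [← ho]
    exact o.2
  · intro o1 h1 o2 h2 h
    simp only [Finset.mem_filter, Finset.mem_univ, true_and] at h1 h2
    have h1' := congrArg Prod.fst h
    have h2' := congrArg Prod.snd h
    simp only at h1' h2'
    apply Subtype.ext
    exact Prod.ext h2' (Prod.ext (h1.trans h2.symm) h1')
  · intro p hp
    rw [Finset.mem_filter] at hp
    exact ⟨⟨(p.2, x, p.1), hp.2⟩, Finset.mem_filter.mpr ⟨Finset.mem_univ _, rfl⟩, rfl⟩
  · intro o ho
    rfl

lemma consistent_lap (μ : G.E → ℝ) (v : G.V → ℝ) (x : G.V) :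
    ∑ o ∈ Finset.univ.filter (fun o : G.OEdge => o.src = x),
      (v o.src - v o.tgt) / μ o.edge = G.lap μ v x := by
  have h1 : ∑ o ∈ Finset.univ.filter (fun o : G.OEdge => o.src = x),
      (v o.src - v o.tgt) / μ o.edge
      = ∑ o ∈ Finset.univ.filter (fun o : G.OEdge => o.src = x),
        (v x - v o.tgt) / μ o.edge := by
    refine Finset.sum_congr rfl (fun o ho => ?_)
    simp only [Finset.mem_filter, Finset.mem_univ, true_and] at ho
    rw [ho]
  rw [h1]
  exact sum_src_eq x (fun e j => (v x - v j) / μ e)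

lemma sum_src_group (g : G.V → ℝ) (f : G.OEdge → ℝ) :
    ∑ o : G.OEdge, g o.src * f o
      = ∑ x : G.V, g x * ∑ o ∈ Finset.univ.filter (fun o : G.OEdge => o.src = x), f o := by
  rw [← Finset.sum_fiberwise Finset.univ (fun o : G.OEdge => o.src) (fun o => g o.src * f o)]
  refine Finset.sum_congr rfl fun x _ => ?_
  rw [Finset.mul_sum]
  refine Finset.sum_congr rfl fun o ho => ?_
  simp only [Finset.mem_filter, Finset.mem_univ, true_and] at ho
  rw [ho]

end ResGraph

theorem stmt5 (G : ResGraph) (hG : G.Connected) (μ : G.E → ℝ) (hμ : ∀ e : G.E, 0 < μ e)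
    (D : G.V → ℝ) (hD : ∑ x : G.V, D x = 0) (v : G.V → ℝ) (hv : G.lap μ v = D) :
    G.IsCurrent (fun o => (v o.src - v o.tgt) / μ o.edge) ∧
    G.Consistent (fun o => (v o.src - v o.tgt) / μ o.edge) D ∧
    (∑ x : G.V, D x * v x) = G.power μ (fun o => (v o.src - v o.tgt) / μ o.edge) ∧
    ∀ I : G.OEdge → ℝ, G.IsCurrent I → G.Consistent I D →
      (∑ x : G.V, D x * v x) ≤ G.power μ I := by
  set J : G.OEdge → ℝ := fun o => (v o.src - v o.tgt) / μ o.edge with hJ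
  have hcur : G.IsCurrent J := by
    intro o
    show (v o.tgt - v o.src) / μ o.edge = -((v o.src - v o.tgt) / μ o.edge)
    ring
  have hcons : G.Consistent J D := by
    intro x
    exact (ResGraph.consistent_lap μ v x).trans (congrFun hv x)
  have hJe : ∀ e : G.E, μ e * J (G.orient e)
      = v (G.orient e).src - v (G.orient e).tgt := by
    intro e
    have h0 : μ e ≠ 0 := (hμ e).ne'
    simp only [hJ]
    rw [G.orient_edge e]
    field_simp
  have hmain : (∑ x : G.V, D x * v x)
      = ∑ e : G.E, (v (G.orient e).src - v (G.orient e).tgt) * J (G.orient e) := by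
    rw [← ResGraph.sum_oedge_eq_sum_edge hcur v, ResGraph.sum_src_group v J]
    refine Finset.sum_congr rfl fun x _ => ?_
    rw [hcons x]
    ring
  have hpow : (∑ x : G.V, D x * v x) = G.power μ J := by
    rw [hmain]
    refine Finset.sum_congr rfl fun e _ => ?_
    rw [← hJe e]
    ring
  refine ⟨hcur, hcons, hpow, ?_⟩
  intro I hI hIc
  set K : G.OEdge → ℝ := fun o => I o - J o with hK
  have hKcur : G.IsCurrent K := by
    intro o
    simp only [hK]
    rw [hI o, hcur o]
    ring
  have hKcons : ∀ x : G.V,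
      ∑ o ∈ Finset.univ.filter (fun o : G.OEdge => o.src = x), K o = 0 := by
    intro x
    simp only [hK]
    rw [Finset.sum_sub_distrib, hIc x, hcons x, sub_self]
  have hzero : ∑ e : G.E,
      (v (G.orient e).src - v (G.orient e).tgt) * K (G.orient e) = 0 := by
    rw [← ResGraph.sum_oedge_eq_sum_edge hKcur v, ResGraph.sum_src_group v K]
    simp only [hKcons, mul_zero, Finset.sum_const_zero]
  have hcross : ∀ e : G.E, μ e * (I (G.orient e)) ^ 2
      = μ e * (J (G.orient e)) ^ 2
        + 2 * ((v (G.orient e).src - v (G.orient e).tgt) * K (G.orient e))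
        + μ e * (K (G.orient e)) ^ 2 := by
    intro e
    have hIe : I (G.orient e) = J (G.orient e) + K (G.orient e) := by simp [hK]
    rw [hIe, ← hJe e]
    ring
  have hsplit : G.power μ I
      = G.power μ J
        + 2 * (∑ e : G.E, (v (G.orient e).src - v (G.orient e).tgt) * K (G.orient e))
        + ∑ e : G.E, μ e * (K (G.orient e)) ^ 2 := by
    show (∑ e : G.E, μ e * (I (G.orient e)) ^ 2) = _
    simp only [hcross]
    rw [Finset.sum_add_distrib, Finset.sum_add_distrib, Finset.mul_sum]
    rfl
  have hnonneg : 0 ≤ ∑ e : G.E, μ e * (K (G.orient e)) ^ 2 :=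
    Finset.sum_nonneg fun e _ => mul_nonneg (hμ e).le (sq_nonneg _)
  rw [hpow, hsplit, hzero]
  linarith
end

section
/- Let Γ be a connected graph and let D ∈ ℝ^{Vert(Γ)} be a zero-sum vector. Then the Green's function is concave in the resistances: for all μ₁, …, μ_n ∈ ℝ_{>0}^{Ed(Γ)} one has g(Γ, Σ_{i=1}^n μ_i; D, D) ≥ Σ_{i=1}^n g(Γ, μ_i; D, D). -/
open Classical
open scoped BigOperators

namespace Stmt6Aux

/-- Sum over all triples `(i, j, e)` with `ends e = s(i, j)`. -/
noncomputable def S3 (G : RGraph) (f : G.V → G.V → G.E → ℝ) : ℝ :=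
  ∑ i : G.V, ∑ j : G.V, ∑ e : G.E, if G.ends e = s(i, j) then f i j e else 0

lemma S3_swap (G : RGraph) (f : G.V → G.V → G.E → ℝ) :
    S3 G f = S3 G (fun i j e => f j i e) := by
  rw [S3, S3, Finset.sum_comm]
  refine Finset.sum_congr rfl fun i _ => Finset.sum_congr rfl fun j _ =>
    Finset.sum_congr rfl fun e _ => ?_
  rw [Sym2.eq_swap]

lemma S3_congr (G : RGraph) (f g : G.V → G.V → G.E → ℝ)
    (h : ∀ i j e, G.ends e = s(i, j) → f i j e = g i j e) : S3 G f = S3 G g := by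
  refine Finset.sum_congr rfl fun i _ => Finset.sum_congr rfl fun j _ =>
    Finset.sum_congr rfl fun e _ => ?_
  split_ifs with hc
  · exact h i j e hc
  · rfl

lemma S3_le (G : RGraph) (f g : G.V → G.V → G.E → ℝ)
    (h : ∀ i j e, G.ends e = s(i, j) → f i j e ≤ g i j e) : S3 G f ≤ S3 G g := by
  refine Finset.sum_le_sum fun i _ => Finset.sum_le_sum fun j _ =>
    Finset.sum_le_sum fun e _ => ?_
  split_ifs with hc
  · exact h i j e hc
  · exact le_refl _

lemma S3_add (G : RGraph) (f g : G.V → G.V → G.E → ℝ) :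
    S3 G f + S3 G g = S3 G (fun i j e => f i j e + g i j e) := by
  simp only [S3, ← Finset.sum_add_distrib]
  refine Finset.sum_congr rfl fun i _ => Finset.sum_congr rfl fun j _ =>
    Finset.sum_congr rfl fun e _ => ?_
  split_ifs <;> simp

lemma S3_smul (G : RGraph) (c : ℝ) (f : G.V → G.V → G.E → ℝ) :
    c * S3 G f = S3 G (fun i j e => c * f i j e) := by
  simp only [S3, Finset.mul_sum, mul_ite, mul_zero]

lemma S3_sum (G : RGraph) {n : ℕ} (f : Fin n → G.V → G.V → G.E → ℝ) :
    ∑ k : Fin n, S3 G (f k) = S3 G (fun i j e => ∑ k : Fin n, f k i j e) := by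
  simp only [S3]
  rw [Finset.sum_comm]
  refine Finset.sum_congr rfl fun i _ => ?_
  rw [Finset.sum_comm]
  refine Finset.sum_congr rfl fun j _ => ?_
  rw [Finset.sum_comm]
  refine Finset.sum_congr rfl fun e _ => ?_
  split_ifs with hc
  · rfl
  · simp

lemma sum_mul_lap (G : RGraph) (μ : G.E → ℝ) (u w : G.V → ℝ) :
    ∑ x : G.V, u x * G.lap μ w x
      = S3 G (fun i j e => u i * ((w i - w j) / μ e)) := by
  unfold S3 RGraph.lap
  refine Finset.sum_congr rfl fun i _ => ?_
  rw [Finset.mul_sum]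
  refine Finset.sum_congr rfl fun j _ => ?_
  rw [Finset.mul_sum]
  refine Finset.sum_congr rfl fun e _ => ?_
  rw [mul_ite, mul_zero]

lemma two_mul_sum_lap (G : RGraph) (μ : G.E → ℝ) (u w : G.V → ℝ) :
    2 * ∑ x : G.V, u x * G.lap μ w x
      = S3 G (fun i j e => (u i - u j) * (w i - w j) / μ e) := by
  rw [two_mul, sum_mul_lap]
  nth_rewrite 2 [S3_swap]
  rw [S3_add]
  refine S3_congr G _ _ fun i j e _ => ?_
  ring

lemma amgm (x y p s : ℝ) (hp : 0 < p) :
    2 * (x * y / s) ≤ x * x / p + p * (y / s) ^ 2 := by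
  rw [mul_div_assoc, ← sub_le_iff_le_add, le_div_iff₀ hp]
  nlinarith [sq_nonneg (x - p * (y / s))]

end Stmt6Aux

theorem stmt6 (G : RGraph) (hG : G.Connected) (D : G.V → ℝ) (hD : ∑ x : G.V, D x = 0)
    (n : ℕ) (μ : Fin n → G.E → ℝ) (hμ : ∀ (k : Fin n) (e : G.E), 0 < μ k e)
    (v : G.V → ℝ) (hv : G.lap (fun e => ∑ k : Fin n, μ k e) v = D)
    (w : Fin n → G.V → ℝ) (hw : ∀ k : Fin n, G.lap (μ k) (w k) = D) :
    ∑ k : Fin n, ∑ x : G.V, D x * w k x ≤ ∑ x : G.V, D x * v x := by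
  classical
  set μS : G.E → ℝ := fun e => ∑ k : Fin n, μ k e with hμSdef
  have hlapv : ∑ x : G.V, D x * v x = ∑ x : G.V, v x * G.lap μS v x := by
    rw [hv]
    exact Finset.sum_congr rfl fun x _ => mul_comm _ _
  have hA : 2 * ∑ x : G.V, D x * v x
      = Stmt6Aux.S3 G (fun i j e => (v i - v j) * (v i - v j) / μS e) := by
    rw [hlapv, Stmt6Aux.two_mul_sum_lap]
  have hP : ∀ k : Fin n, 2 * ∑ x : G.V, D x * w k x
      = Stmt6Aux.S3 G (fun i j e => (w k i - w k j) * (v i - v j) / μS e) := by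
    intro k
    have h1 : ∑ x : G.V, D x * w k x = ∑ x : G.V, w k x * G.lap μS v x := by
      rw [hv]
      exact Finset.sum_congr rfl fun x _ => mul_comm _ _
    rw [h1, Stmt6Aux.two_mul_sum_lap]
  have hQ : ∀ k : Fin n, 2 * ∑ x : G.V, D x * w k x
      = Stmt6Aux.S3 G (fun i j e => (w k i - w k j) * (w k i - w k j) / μ k e) := by
    intro k
    have h1 : ∑ x : G.V, D x * w k x = ∑ x : G.V, w k x * G.lap (μ k) (w k) x := by
      rw [hw k]
      exact Finset.sum_congr rfl fun x _ => mul_comm _ _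
    rw [h1, Stmt6Aux.two_mul_sum_lap]
  -- per-k inequality: 4 T k ≤ 2 T k + R k
  have hper : ∀ k : Fin n,
      2 * (2 * ∑ x : G.V, D x * w k x)
        ≤ 2 * ∑ x : G.V, D x * w k x
          + Stmt6Aux.S3 G (fun i j e => μ k e * ((v i - v j) / μS e) ^ 2) := by
    intro k
    nth_rewrite 1 [hP k]
    nth_rewrite 1 [hQ k]
    rw [Stmt6Aux.S3_smul, Stmt6Aux.S3_add]
    refine Stmt6Aux.S3_le G _ _ fun i j e _ => ?_
    exact Stmt6Aux.amgm (w k i - w k j) (v i - v j) (μ k e) (μS e) (hμ k e)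
  have hsum := Finset.sum_le_sum (s := (Finset.univ : Finset (Fin n))) (fun k _ => hper k)
  have hRsum : ∑ k : Fin n,
      Stmt6Aux.S3 G (fun i j e => μ k e * ((v i - v j) / μS e) ^ 2)
        = 2 * ∑ x : G.V, D x * v x := by
    rw [Stmt6Aux.S3_sum, hA]
    refine Stmt6Aux.S3_congr G _ _ fun i j e _ => ?_
    rw [← Finset.sum_mul]
    show μS e * ((v i - v j) / μS e) ^ 2 = (v i - v j) * (v i - v j) / μS e
    rcases eq_or_ne (μS e) 0 with h | h
    · rw [h]
      simp
    · field_simp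
  have h4 : ∑ k : Fin n, 2 * (2 * ∑ x : G.V, D x * w k x)
      = 4 * ∑ k : Fin n, ∑ x : G.V, D x * w k x := by
    rw [Finset.mul_sum]
    exact Finset.sum_congr rfl fun k _ => by ring
  have h5 : ∑ k : Fin n, (2 * ∑ x : G.V, D x * w k x
      + Stmt6Aux.S3 G (fun i j e => μ k e * ((v i - v j) / μS e) ^ 2))
      = 2 * (∑ k : Fin n, ∑ x : G.V, D x * w k x) + 2 * ∑ x : G.V, D x * v x := by
    rw [Finset.sum_add_distrib, hRsum, Finset.mul_sum, ← Finset.mul_sum]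
  rw [h4, h5] at hsum
  linarith
end

section
/- Let Γ be a connected graph, let D ∈ ℝ^{Vert(Γ)} be a zero-sum vector, and let μ, μ' ∈ ℝ_{>0}^{Ed(Γ)} satisfy μ(e) ≤ μ'(e) for every edge e. Then g(Γ, μ; D, D) ≤ g(Γ, μ'; D, D), with equality if and only if for each edge e with endpoints i, j, either μ(e) = μ'(e) or no current flows along e in both (Γ, μ) and (Γ, μ'), i.e. v_i − v_j = 0 = v'_i − v'_j for v, v' with L_μ v = D and L_{μ'} v' = D. -/
open Classical
open scoped BigOperators

namespace RGraph

/-- The potential drop along the chosen orientation of an edge. -/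
noncomputable def dd (G : RGraph) (v : G.V → ℝ) (e : G.E) : ℝ :=
  v (G.orient e).src - v (G.orient e).tgt

lemma ends_orient (G : RGraph) (e : G.E) :
    G.ends e = s((G.orient e).src, (G.orient e).tgt) := by
  conv_lhs => rw [← G.orient_edge e]
  exact (G.orient e).2

lemma pair_sum (G : RGraph) (e : G.E) {p q : G.V} (h : G.ends e = s(p, q))
    (m : ℝ) (w v : G.V → ℝ) :
    (∑ x : G.V, ∑ j : G.V, if G.ends e = s(x, j) then w x * ((v x - v j) / m) else 0)
      = (w p - w q) * ((v p - v q) / m) := by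
  by_cases hpq : p = q
  · subst hpq
    have hc : ∀ x j : G.V, (G.ends e = s(x, j)) ↔ (x = p ∧ j = p) := by
      intro x j
      rw [h, Sym2.eq_iff]
      constructor
      · rintro (⟨rfl, rfl⟩ | ⟨rfl, rfl⟩) <;> exact ⟨rfl, rfl⟩
      · rintro ⟨rfl, rfl⟩; left; exact ⟨rfl, rfl⟩
    simp only [hc, ite_and]
    simp
  · have hc : ∀ x j : G.V, (G.ends e = s(x, j)) ↔ ((x = p ∧ j = q) ∨ (x = q ∧ j = p)) := by
      intro x j
      rw [h, Sym2.eq_iff]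
      constructor
      · rintro (⟨rfl, rfl⟩ | ⟨rfl, rfl⟩)
        · left; exact ⟨rfl, rfl⟩
        · right; exact ⟨rfl, rfl⟩
      · rintro (⟨rfl, rfl⟩ | ⟨rfl, rfl⟩)
        · left; exact ⟨rfl, rfl⟩
        · right; exact ⟨rfl, rfl⟩
    simp only [hc]
    have hsplit : ∀ x j : G.V,
        (if (x = p ∧ j = q) ∨ (x = q ∧ j = p) then w x * ((v x - v j) / m) else 0)
        = (if x = p ∧ j = q then w x * ((v x - v j) / m) else 0)
          + (if x = q ∧ j = p then w x * ((v x - v j) / m) else 0) := by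
      intro x j
      by_cases h1 : x = p ∧ j = q
      · obtain ⟨rfl, rfl⟩ := h1
        rw [if_pos (Or.inl ⟨rfl, rfl⟩), if_pos (⟨rfl, rfl⟩ : x = x ∧ j = j),
          if_neg (fun hh => hpq hh.1), add_zero]
      · by_cases h2 : x = q ∧ j = p
        · obtain ⟨rfl, rfl⟩ := h2
          rw [if_pos (Or.inr ⟨rfl, rfl⟩), if_neg h1,
            if_pos (⟨rfl, rfl⟩ : x = x ∧ j = j), zero_add]
        · rw [if_neg (by rintro (h | h); exacts [h1 h, h2 h]), if_neg h1, if_neg h2, add_zero]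
    have hone : ∀ (r t : G.V) (F : G.V → G.V → ℝ),
        (∑ x : G.V, ∑ j : G.V, if x = r ∧ j = t then F x j else 0) = F r t := by
      intro r t F
      have hrow : ∀ x : G.V, (∑ j : G.V, if x = r ∧ j = t then F x j else 0)
          = if x = r then F x t else 0 := by
        intro x
        by_cases hx : x = r
        · simp [hx]
        · simp [hx]
      rw [Finset.sum_congr rfl fun x _ => hrow x]
      simp
    simp only [hsplit, Finset.sum_add_distrib]
    rw [hone p q, hone q p]
    ring

lemma bilin (G : RGraph) (μ : G.E → ℝ) (v w : G.V → ℝ) :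
    ∑ x : G.V, w x * G.lap μ v x = ∑ e : G.E, G.dd w e * (G.dd v e / μ e) := by
  unfold RGraph.lap
  simp only [Finset.mul_sum, mul_ite, mul_zero]
  have h1 : ∀ x : G.V,
      (∑ j : G.V, ∑ e : G.E, if G.ends e = s(x, j) then w x * ((v x - v j) / μ e) else 0)
      = ∑ e : G.E, ∑ j : G.V, if G.ends e = s(x, j) then w x * ((v x - v j) / μ e) else 0 :=
    fun x => Finset.sum_comm
  rw [Finset.sum_congr rfl fun x _ => h1 x, Finset.sum_comm]
  refine Finset.sum_congr rfl fun e _ => ?_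
  simp only [RGraph.dd]
  exact G.pair_sum e (G.ends_orient e) (μ e) w v

end RGraph

theorem stmt7 (G : RGraph) (hG : G.Connected) (D : G.V → ℝ) (hD : ∑ x : G.V, D x = 0)
    (μ μ' : G.E → ℝ) (hμ : ∀ e : G.E, 0 < μ e) (hμ' : ∀ e : G.E, 0 < μ' e)
    (hle : ∀ e : G.E, μ e ≤ μ' e)
    (v v' : G.V → ℝ) (hv : G.lap μ v = D) (hv' : G.lap μ' v' = D) :
    (∑ x : G.V, D x * v x ≤ ∑ x : G.V, D x * v' x) ∧
    ((∑ x : G.V, D x * v x = ∑ x : G.V, D x * v' x) ↔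
      ∀ (e : G.E) (i j : G.V), G.ends e = s(i, j) →
        μ e = μ' e ∨ (v i - v j = 0 ∧ v' i - v' j = 0)) := by
  have S1 : ∑ x : G.V, D x * v x = ∑ e : G.E, G.dd v e * (G.dd v e / μ e) := by
    have h := G.bilin μ v v
    rw [hv] at h
    rw [← h]
    exact Finset.sum_congr rfl fun x _ => mul_comm _ _
  have S2 : ∑ x : G.V, D x * v' x = ∑ e : G.E, G.dd v' e * (G.dd v e / μ e) := by
    have h := G.bilin μ v v'
    rw [hv] at h
    rw [← h]
    exact Finset.sum_congr rfl fun x _ => mul_comm _ _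
  have S3 : ∑ x : G.V, D x * v x = ∑ e : G.E, G.dd v e * (G.dd v' e / μ' e) := by
    have h := G.bilin μ' v' v
    rw [hv'] at h
    rw [← h]
    exact Finset.sum_congr rfl fun x _ => mul_comm _ _
  have S4 : ∑ x : G.V, D x * v' x = ∑ e : G.E, G.dd v' e * (G.dd v' e / μ' e) := by
    have h := G.bilin μ' v' v'
    rw [hv'] at h
    rw [← h]
    exact Finset.sum_congr rfl fun x _ => mul_comm _ _
  have key : (∑ x : G.V, D x * v' x) - (∑ x : G.V, D x * v x)
      = ∑ e : G.E, ((G.dd v e - G.dd v' e) ^ 2 / μ' e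
          + (G.dd v e) ^ 2 * (1 / μ e - 1 / μ' e)) := by
    have hpt : ∀ e : G.E, (G.dd v e - G.dd v' e) ^ 2 / μ' e
        + (G.dd v e) ^ 2 * (1 / μ e - 1 / μ' e)
        = G.dd v e * (G.dd v e / μ e) - 2 * (G.dd v e * (G.dd v' e / μ' e))
          + G.dd v' e * (G.dd v' e / μ' e) := fun e => by ring
    rw [Finset.sum_congr rfl fun e _ => hpt e, Finset.sum_add_distrib,
      Finset.sum_sub_distrib, ← Finset.mul_sum, ← S1, ← S3, ← S4]
    ring
  have key2 : (∑ x : G.V, D x * v' x) - (∑ x : G.V, D x * v x)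
      = ∑ e : G.E, G.dd v e * G.dd v' e * (1 / μ e - 1 / μ' e) := by
    have hpt : ∀ e : G.E, G.dd v e * G.dd v' e * (1 / μ e - 1 / μ' e)
        = G.dd v' e * (G.dd v e / μ e) - G.dd v e * (G.dd v' e / μ' e) := fun e => by ring
    rw [Finset.sum_congr rfl fun e _ => hpt e, Finset.sum_sub_distrib, ← S2, ← S3]
  have hterm : ∀ e : G.E, 0 ≤ (G.dd v e - G.dd v' e) ^ 2 / μ' e
      + (G.dd v e) ^ 2 * (1 / μ e - 1 / μ' e) := fun e =>
    add_nonneg (div_nonneg (sq_nonneg _) (hμ' e).le)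
      (mul_nonneg (sq_nonneg _)
        (sub_nonneg.2 (one_div_le_one_div_of_le (hμ e) (hle e))))
  have hle' : (∑ x : G.V, D x * v x) ≤ ∑ x : G.V, D x * v' x := by
    have h0 : 0 ≤ (∑ x : G.V, D x * v' x) - (∑ x : G.V, D x * v x) := by
      rw [key]; exact Finset.sum_nonneg fun e _ => hterm e
    linarith
  refine ⟨hle', ?_, ?_⟩
  · intro heq e i j hij
    have h0 : ∑ e : G.E, ((G.dd v e - G.dd v' e) ^ 2 / μ' e
        + (G.dd v e) ^ 2 * (1 / μ e - 1 / μ' e)) = 0 := by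
      rw [← key, heq]; ring
    have hz := (Finset.sum_eq_zero_iff_of_nonneg fun e _ => hterm e).1 h0 e (Finset.mem_univ e)
    have hz2 := (add_eq_zero_iff_of_nonneg (div_nonneg (sq_nonneg _) (hμ' e).le)
      (mul_nonneg (sq_nonneg _)
        (sub_nonneg.2 (one_div_le_one_div_of_le (hμ e) (hle e))))).1 hz
    have hab : G.dd v e = G.dd v' e := by
      have h1 : (G.dd v e - G.dd v' e) ^ 2 = 0 := by
        rcases div_eq_zero_iff.1 hz2.1 with h | h
        · exact h
        · exact absurd h (hμ' e).ne'
      have := pow_eq_zero_iff (n := 2) (by norm_num) |>.1 h1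
      linarith [sub_eq_zero.1 this]
    rcases mul_eq_zero.1 hz2.2 with h | h
    · have ha0 : G.dd v e = 0 := by
        have := pow_eq_zero_iff (n := 2) (by norm_num) |>.1 h
        exact this
      have hb0 : G.dd v' e = 0 := hab ▸ ha0
      right
      have hends := (G.ends_orient e).symm.trans hij
      have hvv : v (G.orient e).src - v (G.orient e).tgt = 0 := ha0
      have hvv' : v' (G.orient e).src - v' (G.orient e).tgt = 0 := hb0
      rcases Sym2.eq_iff.1 hends with ⟨h1, h2⟩ | ⟨h1, h2⟩
      · rw [h1, h2] at hvv hvv'; exact ⟨hvv, hvv'⟩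
      · rw [h1, h2] at hvv hvv'
        exact ⟨by linarith, by linarith⟩
    · left
      have : (1 : ℝ) / μ e = 1 / μ' e := by linarith
      have := (div_eq_div_iff (hμ e).ne' (hμ' e).ne').1 this
      linarith
  · intro hC
    have h0 : ∑ e : G.E, G.dd v e * G.dd v' e * (1 / μ e - 1 / μ' e) = 0 := by
      refine Finset.sum_eq_zero fun e _ => ?_
      rcases hC e (G.orient e).src (G.orient e).tgt (G.ends_orient e) with h | ⟨h1, h2⟩
      · rw [h]; ring
      · have ha0 : G.dd v e = 0 := h1
        rw [ha0]; ring
    rw [h0] at key2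
    linarith
end

section
/- Let Γ be a graph, S ⊆ Ed(Γ), and F ⊆ Ed(Γ) such that F ∩ S is a maximal forest of Γ|_S. Then F is cycle-free in Γ (i.e. Γ|_F contains no cycle) if and only if F∖S is cycle-free in the contracted graph Γ/S. -/
open Classical
open scoped BigOperators

/-- A graph: a finite set of vertices, a finite set of edges, and a map assigning to
each edge its unordered pair of endpoints (loops and parallel edges allowed). -/
structure FinGraph where
  V : Type
  E : Type
  [fintV : Fintype V]
  [decV : DecidableEq V]
  [fintE : Fintype E]
  [decE : DecidableEq E]
  ends : E → Sym2 V

attribute [instance] FinGraph.fintV FinGraph.decV FinGraph.fintE FinGraph.decE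

namespace FinGraph

variable (G : FinGraph)

/-- The Laplacian of the resistive network `(G, μ)` applied to a voltage assignment `v`:
`(L v) i = Σ_j Σ_{edges e : i → j} (v i − v j) / μ e`. -/
noncomputable def lap (μ : G.E → ℝ) (v : G.V → ℝ) : G.V → ℝ := fun i =>
  ∑ j : G.V, ∑ e : G.E, if G.ends e = s(i, j) then (v i - v j) / μ e else 0

/-- `i` and `j` are joined by an edge belonging to `F`. -/
def Adj (F : Set G.E) (i j : G.V) : Prop := ∃ e ∈ F, G.ends e = s(i, j)

/-- `i` and `j` lie in the same connected component of the subgraph `Γ|_F`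
(the subgraph with all vertices of `Γ` and edge set `F`). -/
def Reach (F : Set G.E) (i j : G.V) : Prop := Relation.EqvGen (G.Adj F) i j

/-- The subgraph `Γ|_F` is connected. -/
def ConnOn (F : Set G.E) : Prop := ∀ i j : G.V, G.Reach F i j

/-- The graph `G` is connected. -/
def Connected : Prop := G.ConnOn Set.univ

/-- The set of connected components of the subgraph `Γ|_F`. -/
def Comp (F : Set G.E) : Type := Quotient (Relation.EqvGen.setoid (G.Adj F))

/-- A walk from `i` to `j`: a finite sequence of vertices together with a choice of an
edge from each vertex to the next. -/
inductive Walk : G.V → G.V → Type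
  | nil (i : G.V) : Walk i i
  | cons {i j k : G.V} (e : G.E) (he : G.ends e = s(i, j)) (w : Walk j k) : Walk i k

namespace Walk

variable {G}

/-- The list of vertices visited by a walk, in order (starting vertex first). -/
def vertices : ∀ {i j : G.V}, G.Walk i j → List G.V
  | _, _, .nil a => [a]
  | _, _, @Walk.cons _ a _ _ _ _ w => a :: vertices w

/-- The list of edges traversed by a walk, in order. -/
def edges : ∀ {i j : G.V}, G.Walk i j → List G.E
  | _, _, .nil _ => []
  | _, _, .cons e _ w => e :: edges w

/-- The list of steps `(source, edge, target)` of a walk. -/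
def steps : ∀ {i j : G.V}, G.Walk i j → List (G.V × G.E × G.V)
  | _, _, .nil _ => []
  | _, _, @Walk.cons _ a b _ e _ w => (a, e, b) :: steps w

/-- All edges of the walk lie in the edge set `F`. -/
def In {i j : G.V} (w : G.Walk i j) (F : Set G.E) : Prop := ∀ e ∈ w.edges, e ∈ F

/-- A path: a walk all of whose vertices are distinct, except possibly the start and the
end vertex (and which does not traverse any edge twice). -/
def IsPath {i j : G.V} (w : G.Walk i j) : Prop :=
  w.vertices.dropLast.Nodup ∧ w.vertices.tail.Nodup ∧ w.edges.Nodup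

/-- Change the (definitionally equal) endpoints of a walk. -/
def copy : ∀ {i j i' j' : G.V}, G.Walk i j → i = i' → j = j' → G.Walk i' j'
  | _, _, _, _, w, rfl, rfl => w

variable (G)

end Walk

/-- `F` is cycle-free: the subgraph `Γ|_F` contains no cycle, i.e. every closed path
with edges in `F` is trivial. -/
def CycleFree (F : Set G.E) : Prop :=
  ∀ (i : G.V) (w : G.Walk i i), w.In F → w.IsPath → w.edges = []

/-- `T` is a spanning tree of `G`: the subgraph `Γ|_T` is connected and cycle-free. -/
def IsSpanningTree (T : Set G.E) : Prop := G.ConnOn T ∧ G.CycleFree T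

/-- `F` is a 2-forest: `Γ|_F` is cycle-free with exactly two connected components. -/
def IsTwoForest (F : Set G.E) : Prop := G.CycleFree F ∧ Nat.card (G.Comp F) = 2

/-- `M` is a maximal forest of the subgraph `Γ|_S`: it is a cycle-free subset of `S`
containing a spanning tree of each connected component of `Γ|_S` (equivalently,
inducing the same connected components as `S`). -/
def IsMaxForestOf (M S : Set G.E) : Prop :=
  M ⊆ S ∧ G.CycleFree M ∧ ∀ i j : G.V, G.Reach S i j ↔ G.Reach M i j

/-- The sign `σ(i,j;k,ℓ;F)` attached to a 2-forest `F`: `+1` if one component of `Γ|_F`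
contains `i` and `k` and the other contains `j` and `ℓ`; `-1` if one component contains
`i` and `ℓ` and the other contains `j` and `k`; `0` otherwise. -/
noncomputable def sigma2 (F : Set G.E) (i j k l : G.V) : ℝ :=
  if ¬ G.Reach F i j ∧ G.Reach F i k ∧ G.Reach F j l then 1
  else if ¬ G.Reach F i j ∧ G.Reach F i l ∧ G.Reach F j k then -1
  else 0

end FinGraph

namespace FinGraph

variable (G : FinGraph)

/-- An oriented edge: an edge together with an ordering of its endpoints. -/
def OEdge : Type := {x : G.E × G.V × G.V // G.ends x.1 = s(x.2.1, x.2.2)}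

noncomputable instance : Fintype G.OEdge := Subtype.fintype _

namespace OEdge

variable {G}

/-- The underlying edge of an oriented edge. -/
def edge (o : G.OEdge) : G.E := o.1.1

/-- The source of an oriented edge. -/
def src (o : G.OEdge) : G.V := o.1.2.1

/-- The target of an oriented edge. -/
def tgt (o : G.OEdge) : G.V := o.1.2.2

/-- The reversal of an oriented edge. -/
def rev (o : G.OEdge) : G.OEdge := ⟨(o.1.1, o.1.2.2, o.1.2.1), o.2.trans Sym2.eq_swap⟩

end OEdge

/-- An edge current assignment: a real-valued function on oriented edges with
`I(e : i → j) = −I(e : j → i)`. -/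
def IsCurrent (I : G.OEdge → ℝ) : Prop := ∀ o : G.OEdge, I o.rev = - I o

/-- The edge current assignment `I` is consistent with the vertex current assignment `D`:
for every vertex `i`, `Σ_j Σ_{edges e : i → j} I(e : i → j) = D i`. -/
def Consistent (I : G.OEdge → ℝ) (D : G.V → ℝ) : Prop :=
  ∀ x : G.V, (∑ o ∈ Finset.univ.filter (fun o : G.OEdge => o.src = x), I o) = D x

lemma exists_oedge (e : G.E) : ∃ o : G.OEdge, o.edge = e := by
  have h : ∀ z : Sym2 G.V, G.ends e = z → ∃ o : G.OEdge, o.edge = e := by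
    refine Sym2.ind (fun a b h => ?_)
    exact ⟨⟨(e, a, b), h⟩, rfl⟩
  exact h (G.ends e) rfl

/-- A choice of orientation for each edge. -/
noncomputable def orient (e : G.E) : G.OEdge := Classical.choose (G.exists_oedge e)

lemma orient_edge (e : G.E) : (G.orient e).edge = e := Classical.choose_spec (G.exists_oedge e)

/-- The power dissipated by an edge current assignment: `Σ_{e ∈ Ed(Γ)} μ(e) I(e)²`. -/
noncomputable def power (μ : G.E → ℝ) (I : G.OEdge → ℝ) : ℝ :=
  ∑ e : G.E, μ e * (I (G.orient e)) ^ 2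

/-- The Green's function `g(Γ, μ; D, E) = Dᵀ v` for any `v` with `L v = E`
(for `Γ` connected, `μ` proper, and `D`, `E` zero-sum vectors, such a `v` exists and
`Dᵀ v` does not depend on the choice). -/
noncomputable def green (μ : G.E → ℝ) (D E : G.V → ℝ) : ℝ :=
  if h : ∃ v : G.V → ℝ, G.lap μ v = E then ∑ x : G.V, D x * Classical.choose h x else 0

/-- The contracted graph `Γ/S`: identify the two endpoints of each edge in `S` and
delete the edges in `S`. -/
noncomputable def contract (S : Set G.E) : FinGraph :=
  letI : DecidableEq (Quotient (Relation.EqvGen.setoid (G.Adj S))) := Classical.decEq _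
  letI : DecidablePred (· ∈ S) := Classical.decPred _
  { V := Quotient (Relation.EqvGen.setoid (G.Adj S))
    E := {e : G.E // e ∉ S}
    ends := fun e => (G.ends e.1).map (Quotient.mk (Relation.EqvGen.setoid (G.Adj S))) }

/-- The quotient map `[·] : Vert(Γ) → Vert(Γ/S)`. -/
noncomputable def cmk (S : Set G.E) (x : G.V) : (G.contract S).V :=
  Quotient.mk (Relation.EqvGen.setoid (G.Adj S)) x

/-- The edge of `Γ` underlying an edge of `Γ/S` (recall `Ed(Γ/S) = Ed(Γ)∖S`). -/
noncomputable def cval (S : Set G.E) (e : (G.contract S).E) : G.E := e.1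

/-- The subset of `Ed(Γ/S) = Ed(Γ)∖S` induced by a subset `F ⊆ Ed(Γ)`, namely `F∖S`. -/
noncomputable def cset (S : Set G.E) (F : Set G.E) : Set (G.contract S).E :=
  {e : (G.contract S).E | G.cval S e ∈ F}

/-- The linear map `[·] : ℝ^{Vert(Γ)} → ℝ^{Vert(Γ/S)}` sending the basis vector `e_i`
to `e_{[i]}`. -/
noncomputable def pushVec (S : Set G.E) (D : G.V → ℝ) : (G.contract S).V → ℝ := fun x =>
  ∑ i ∈ Finset.univ.filter (fun i : G.V => G.cmk S i = x), D i

/-- Contraction of walks: delete from a walk in `Γ` the edges belonging to `S`,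
obtaining a walk in `Γ/S`. -/
noncomputable def contractWalk (S : Set G.E) :
    ∀ {i j : G.V}, G.Walk i j → (G.contract S).Walk (G.cmk S i) (G.cmk S j)
  | _, _, .nil a => .nil (G.cmk S a)
  | _, _, @Walk.cons _ a b _ e he w =>
    if hS : e ∈ S then
      (contractWalk S w).copy
        (Quotient.sound (Relation.EqvGen.rel b a ⟨e, hS, he.trans Sym2.eq_swap⟩)) rfl
    else
      Walk.cons (j := G.cmk S b) ⟨e, hS⟩
        (by show Sym2.map _ (G.ends e) = s(G.cmk S a, G.cmk S b)
            rw [he]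
            exact Sym2.map_pair_eq _ a b) (contractWalk S w)

/-- The current `I_{Γ|_T}(e : i → j)` flowing along the oriented edge `e : i → j` when a
unit current from `k` to `ℓ` is imposed on the spanning tree `Γ|_T`: it is `+1` if `e ∈ T`
and the unique path in `Γ|_T` from `k` to `ℓ` traverses `e` from `i` to `j`, `−1` if it
traverses `e` from `j` to `i`, and `0` otherwise. -/
noncomputable def treeCurrent (T : Set G.E) (k l : G.V) (e : G.E) (i j : G.V) : ℝ :=
  if e ∈ T ∧ ∃ w : G.Walk k l, w.IsPath ∧ w.In T ∧ (i, e, j) ∈ w.steps then 1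
  else if e ∈ T ∧ ∃ w : G.Walk k l, w.IsPath ∧ w.In T ∧ (j, e, i) ∈ w.steps then -1
  else 0

/-- The extended Green's function on possibly improper resistances: contract the edges of
zero resistance and take the Green's function of the resulting proper network, with the
pushed-forward vertex vectors. -/
noncomputable def egreen (μ : G.E → ℝ) (D E : G.V → ℝ) : ℝ :=
  (G.contract {e : G.E | μ e = 0}).green (fun e => μ (G.cval {e : G.E | μ e = 0} e))
    (G.pushVec {e : G.E | μ e = 0} D) (G.pushVec {e : G.E | μ e = 0} E)

end FinGraph

namespace FinGraph

variable {G : FinGraph}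

namespace Walk

/-- Concatenation of walks. -/
def append : ∀ {i j k : G.V}, G.Walk i j → G.Walk j k → G.Walk i k
  | _, _, _, .nil _, w2 => w2
  | _, _, _, .cons e he w, w2 => .cons e he (append w w2)

lemma edges_append : ∀ {i j k : G.V} (w1 : G.Walk i j) (w2 : G.Walk j k),
    (w1.append w2).edges = w1.edges ++ w2.edges
  | _, _, _, .nil _, _ => rfl
  | _, _, _, .cons e he w, w2 => by
      simp [append, edges, edges_append w w2]

/-- Reversal of a walk. -/
def reverse : ∀ {i j : G.V}, G.Walk i j → G.Walk j i
  | _, _, .nil a => .nil a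
  | _, _, .cons e he w => (reverse w).append (.cons e (he.trans Sym2.eq_swap) (.nil _))

lemma mem_edges_reverse : ∀ {i j : G.V} (w : G.Walk i j) (f : G.E),
    f ∈ w.reverse.edges → f ∈ w.edges
  | _, _, .nil _, f => by simp [reverse]
  | _, _, .cons e he w, f => by
      simp only [reverse, edges_append, edges, List.mem_append, List.mem_cons,
        List.not_mem_nil, or_false]
      rintro (h | h)
      · exact Or.inr (mem_edges_reverse w f h)
      · exact Or.inl h

lemma edges_copy : ∀ {i j i' j' : G.V} (w : G.Walk i j) (h1 : i = i') (h2 : j = j'),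
    (w.copy h1 h2).edges = w.edges
  | _, _, _, _, _, rfl, rfl => rfl

lemma vertices_ne_nil : ∀ {i j : G.V} (w : G.Walk i j), w.vertices ≠ []
  | _, _, .nil _ => by simp [vertices]
  | _, _, .cons _ _ _ => by simp [vertices]

lemma start_mem_vertices : ∀ {i j : G.V} (w : G.Walk i j), i ∈ w.vertices
  | _, _, .nil _ => by simp [vertices]
  | _, _, .cons _ _ _ => by simp [vertices]

lemma vertices_eq_dropLast_append : ∀ {i j : G.V} (w : G.Walk i j),
    w.vertices = w.vertices.dropLast ++ [j]
  | _, _, .nil a => rfl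
  | _, _, .cons e he w => by
      have h := vertices_eq_dropLast_append w
      simp only [vertices]
      rw [List.dropLast_cons_of_ne_nil (vertices_ne_nil w)]
      simp only [List.cons_append]
      exact congrArg _ h

lemma steps_ends : ∀ {i j : G.V} (w : G.Walk i j) {a b : G.V} {e : G.E},
    (a, e, b) ∈ w.steps → G.ends e = s(a, b)
  | _, _, .nil _, a, b, e => by simp [steps]
  | _, _, .cons f hf w, a, b, e => by
      simp only [steps, List.mem_cons, Prod.mk.injEq]
      rintro (⟨rfl, rfl, rfl⟩ | h)
      · exact hf
      · exact steps_ends w h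

lemma steps_fst_mem : ∀ {i j : G.V} (w : G.Walk i j) {a b : G.V} {e : G.E},
    (a, e, b) ∈ w.steps → a ∈ w.vertices ∧ b ∈ w.vertices
  | _, _, .nil _, a, b, e => by simp [steps]
  | _, _, .cons f hf w, a, b, e => by
      simp only [steps, List.mem_cons, Prod.mk.injEq, vertices]
      rintro (⟨rfl, rfl, rfl⟩ | h)
      · exact ⟨Or.inl rfl, Or.inr (start_mem_vertices w)⟩
      · rcases steps_fst_mem w h with ⟨h1, h2⟩
        exact ⟨Or.inr h1, Or.inr h2⟩

lemma mem_edges_iff_steps : ∀ {i j : G.V} (w : G.Walk i j) (e : G.E),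
    e ∈ w.edges ↔ ∃ a b, (a, e, b) ∈ w.steps
  | _, _, .nil _, e => by simp [edges, steps]
  | _, _, @Walk.cons _ i m _ f hf w, e => by
      simp only [edges, steps, List.mem_cons, Prod.mk.injEq]
      constructor
      · rintro (rfl | h)
        · exact ⟨i, m, Or.inl ⟨rfl, rfl, rfl⟩⟩
        · rcases (mem_edges_iff_steps w e).1 h with ⟨a, b, hab⟩
          exact ⟨a, b, Or.inr hab⟩
      · rintro ⟨a, b, (⟨rfl, rfl, rfl⟩ | h)⟩
        · exact Or.inl rfl
        · exact Or.inr ((mem_edges_iff_steps w e).2 ⟨a, b, h⟩)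

lemma edges_nodup_of_vertices_nodup : ∀ {i j : G.V} (w : G.Walk i j),
    w.vertices.Nodup → w.edges.Nodup
  | _, _, .nil _ => fun _ => by simp [edges]
  | _, _, @Walk.cons _ i m _ f hf w => by
      simp only [vertices, edges, List.nodup_cons]
      rintro ⟨hi, hnd⟩
      refine ⟨fun hmem => ?_, edges_nodup_of_vertices_nodup w hnd⟩
      rcases (mem_edges_iff_steps w f).1 hmem with ⟨a, b, hab⟩
      have hends := steps_ends w hab
      have h2 : s(i, m) = s(a, b) := hf.symm.trans hends
      rcases Sym2.eq_iff.1 h2 with ⟨rfl, rfl⟩ | ⟨rfl, rfl⟩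
      · exact hi (steps_fst_mem w hab).1
      · exact hi (steps_fst_mem w hab).2

end Walk

/-- From reachability, get a walk. -/
lemma walk_of_reach {F : Set G.E} {i j : G.V} (h : G.Reach F i j) :
    ∃ w : G.Walk i j, w.In F := by
  induction h with
  | rel a b hab =>
      rcases hab with ⟨e, heF, he⟩
      exact ⟨.cons e he (.nil b), by
        intro f hf
        simp only [Walk.edges, List.mem_cons, List.not_mem_nil, or_false] at hf
        exact hf ▸ heF⟩
  | refl a => exact ⟨.nil a, by intro f hf; simp [Walk.edges] at hf⟩
  | symm a b _ ih =>
      rcases ih with ⟨w, hw⟩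
      exact ⟨w.reverse, fun f hf => hw f (Walk.mem_edges_reverse w f hf)⟩
  | trans a b c _ _ ih1 ih2 =>
      rcases ih1 with ⟨w1, hw1⟩
      rcases ih2 with ⟨w2, hw2⟩
      refine ⟨w1.append w2, fun f hf => ?_⟩
      rw [Walk.edges_append] at hf
      rcases List.mem_append.1 hf with h | h
      · exact hw1 f h
      · exact hw2 f h

/-- Truncate a walk at a vertex it visits. -/
lemma exists_dropUntil : ∀ {m j : G.V} (w : G.Walk m j) (i : G.V), i ∈ w.vertices →
    ∃ t : G.Walk i j, (∀ f ∈ t.edges, f ∈ w.edges) ∧ t.edges.length ≤ w.edges.length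
  | _, _, .nil a, i => by
      intro hi
      simp only [Walk.vertices, List.mem_singleton] at hi
      subst hi
      exact ⟨.nil i, by simp [Walk.edges], le_refl _⟩
  | _, _, @Walk.cons _ a b _ e he w, i => by
      intro hi
      simp only [Walk.vertices, List.mem_cons] at hi
      rcases eq_or_ne i a with rfl | hne
      · exact ⟨.cons e he w, fun f hf => hf, le_refl _⟩
      · have hi' : i ∈ w.vertices := hi.resolve_left hne
        rcases exists_dropUntil w i hi' with ⟨t, ht1, ht2⟩
        refine ⟨t, fun f hf => ?_, ?_⟩
        · simp only [Walk.edges, List.mem_cons]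
          exact Or.inr (ht1 f hf)
        · simp only [Walk.edges, List.length_cons]
          omega

lemma exists_shorter : ∀ {i j : G.V} (w : G.Walk i j), ¬ w.vertices.Nodup →
    ∃ w' : G.Walk i j, (∀ f ∈ w'.edges, f ∈ w.edges) ∧ w'.edges.length < w.edges.length
  | _, _, .nil a => by intro h; exact absurd (by simp [Walk.vertices]) h
  | _, _, @Walk.cons _ a b _ e he w => by
      intro h
      simp only [Walk.vertices, List.nodup_cons, not_and_or, not_not] at h
      rcases h with h | h
      · rcases exists_dropUntil w a h with ⟨t, ht1, ht2⟩
        refine ⟨t, fun f hf => ?_, ?_⟩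
        · simp only [Walk.edges, List.mem_cons]; exact Or.inr (ht1 f hf)
        · simp only [Walk.edges, List.length_cons]; omega
      · rcases exists_shorter w h with ⟨w', hw1, hw2⟩
        refine ⟨.cons e he w', fun f hf => ?_, ?_⟩
        · simp only [Walk.edges, List.mem_cons] at hf ⊢
          rcases hf with rfl | hf
          · exact Or.inl rfl
          · exact Or.inr (hw1 f hf)
        · simp only [Walk.edges, List.length_cons]; omega

lemma exists_nodup_aux : ∀ (n : ℕ) {i j : G.V} (w : G.Walk i j), w.edges.length ≤ n →
    ∃ p : G.Walk i j, (∀ f ∈ p.edges, f ∈ w.edges) ∧ p.vertices.Nodup := by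
  intro n
  induction n with
  | zero =>
      intro i j w _
      by_cases h : w.vertices.Nodup
      · exact ⟨w, fun f hf => hf, h⟩
      · rcases exists_shorter w h with ⟨w', _, hlt⟩
        omega
  | succ n ih =>
      intro i j w hw
      by_cases h : w.vertices.Nodup
      · exact ⟨w, fun f hf => hf, h⟩
      · rcases exists_shorter w h with ⟨w', hsub, hlt⟩
        rcases ih w' (by omega) with ⟨p, hp1, hp2⟩
        exact ⟨p, fun f hf => hsub f (hp1 f hf), hp2⟩

lemma exists_nodup_walk {i j : G.V} (w : G.Walk i j) :
    ∃ p : G.Walk i j, (∀ f ∈ p.edges, f ∈ w.edges) ∧ p.vertices.Nodup :=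
  exists_nodup_aux w.edges.length w (le_refl _)

/-- The master lemma: an edge together with a walk back avoiding it yields a cycle. -/
lemma not_cycleFree_of_walk {F : Set G.E} {e : G.E} {a b : G.V}
    (heF : e ∈ F) (he : G.ends e = s(a, b)) (q : G.Walk b a)
    (hq : ∀ f ∈ q.edges, f ∈ F ∧ f ≠ e) : ¬ G.CycleFree F := by
  rcases exists_nodup_walk q with ⟨p, hsub, hnd⟩
  intro hCF
  have hin : (Walk.cons e he p).In F := by
    intro f hf
    simp only [Walk.edges, List.mem_cons] at hf
    rcases hf with rfl | hf
    · exact heF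
    · exact (hq f (hsub f hf)).1
  have hpath : (Walk.cons e he p).IsPath := by
    have hsplit := Walk.vertices_eq_dropLast_append p
    have hnd' : (p.vertices.dropLast ++ [a]).Nodup := hsplit ▸ hnd
    have hanotin : a ∉ p.vertices.dropLast := by
      intro ha
      have := List.disjoint_of_nodup_append hnd'
      exact this ha (List.mem_singleton_self a)
    refine ⟨?_, ?_, ?_⟩
    · show ((a :: p.vertices).dropLast).Nodup
      rw [List.dropLast_cons_of_ne_nil (Walk.vertices_ne_nil p)]
      exact List.nodup_cons.2 ⟨hanotin, hnd.sublist (List.dropLast_sublist _)⟩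
    · show (p.vertices).Nodup
      exact hnd
    · show (e :: p.edges).Nodup
      refine List.nodup_cons.2 ⟨fun hmem => ?_, Walk.edges_nodup_of_vertices_nodup p hnd⟩
      exact (hq e (hsub e hmem)).2 rfl
  have := hCF a (Walk.cons e he p) hin hpath
  simp [Walk.edges] at this

/-- Splitting a walk at a step whose edge is traversed exactly once. -/
lemma split_of_step : ∀ {i j : G.V} (w : G.Walk i j) {a b : G.V} {e : G.E},
    (a, e, b) ∈ w.steps → w.edges.count e = 1 →
    ∃ (w1 : G.Walk i a) (w2 : G.Walk b j),
      ∀ f ∈ w1.edges ++ w2.edges, f ∈ w.edges ∧ f ≠ e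
  | _, _, .nil _, a, b, e => by
      intro h
      simp only [Walk.steps, List.not_mem_nil] at h
  | _, _, @Walk.cons _ i m _ g hg w, a, b, e => by
      intro hstep hcount
      simp only [Walk.steps, List.mem_cons, Prod.mk.injEq] at hstep
      rcases hstep with ⟨rfl, rfl, rfl⟩ | hstep
      · -- the first step
        have h0 : w.edges.count e = 0 := by
          simp only [Walk.edges, List.count_cons_self] at hcount
          omega
        refine ⟨.nil _, w, fun f hf => ?_⟩
        simp only [Walk.edges, List.nil_append] at hf ⊢
        refine ⟨List.mem_cons_of_mem _ hf, fun hfe => ?_⟩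
        subst hfe
        exact absurd (List.count_eq_zero.1 h0) (not_not.2 hf)
      · have hmem : e ∈ w.edges :=
          (Walk.mem_edges_iff_steps w e).2 ⟨a, b, hstep⟩
        have hge : 1 ≤ w.edges.count e := List.one_le_count_iff.2 hmem
        have hne : g ≠ e := by
          intro hge'; subst hge'
          simp only [Walk.edges, List.count_cons_self] at hcount
          omega
        have hcount' : w.edges.count e = 1 := by
          simp only [Walk.edges] at hcount
          rwa [List.count_cons_of_ne hne] at hcount
        rcases split_of_step w hstep hcount' with ⟨w1, w2, hw⟩
        refine ⟨.cons g hg w1, w2, fun f hf => ?_⟩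
        simp only [Walk.edges, List.cons_append, List.mem_cons] at hf ⊢
        rcases hf with rfl | hf
        · exact ⟨Or.inl rfl, hne⟩
        · rcases hw f hf with ⟨h1, h2⟩
          exact ⟨Or.inr h1, h2⟩

lemma edges_contractWalk (S : Set G.E) : ∀ {i j : G.V} (w : G.Walk i j)
    (ε : (G.contract S).E), ε ∈ (G.contractWalk S w).edges → ε.1 ∈ w.edges
  | _, _, .nil _, ε => by simp [contractWalk, Walk.edges]
  | _, _, @Walk.cons _ a b _ e he w, ε => by
      intro hε
      simp only [contractWalk] at hε
      split at hε
      · have hc : ∀ {i j i' j' : (G.contract S).V} (w : (G.contract S).Walk i j) (h1 : i = i')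
            (h2 : j = j'), ε ∈ (w.copy h1 h2).edges → ε ∈ w.edges :=
          fun w h1 h2 h => (Walk.edges_copy w h1 h2) ▸ h
        exact List.mem_cons_of_mem _ (edges_contractWalk S w ε (hc _ _ _ hε))
      · simp only [Walk.edges, List.mem_cons] at hε ⊢
        rcases List.mem_cons.1 hε with rfl | hε
        · exact Or.inl rfl
        · exact Or.inr (edges_contractWalk S w ε hε)

/-- Lifting a walk from the contracted graph. -/
lemma lift_walk {S F : Set G.E} (hR : ∀ i j : G.V, G.Reach S i j → G.Reach (F ∩ S) i j) :
    ∀ {u v : (G.contract S).V} (w' : (G.contract S).Walk u v),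
      w'.In (G.cset S F) → ∀ a b : G.V, G.cmk S a = u → G.cmk S b = v →
      ∃ w : G.Walk a b, ∀ f ∈ w.edges,
        f ∈ F ∧ (f ∈ S ∨ ∃ hf : f ∉ S, (⟨f, hf⟩ : (G.contract S).E) ∈ w'.edges)
  | _, _, .nil u => by
      intro _ a b ha hb
      have hreach : G.Reach S a b := Quotient.exact (ha.trans hb.symm)
      rcases walk_of_reach (hR a b hreach) with ⟨w, hw⟩
      refine ⟨w, fun f hf => ?_⟩
      rcases hw f hf with ⟨h1, h2⟩
      exact ⟨h1, Or.inl h2⟩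
  | _, _, @Walk.cons _ u m _ ε hε w' => by
      intro hin a b ha hb
      have hεF : ε.1 ∈ F := hin ε (by simp [Walk.edges])
      have hin' : w'.In (G.cset S F) := fun f hf =>
        hin f (List.mem_cons_of_mem _ hf)
      obtain ⟨⟨p, q⟩, hpq⟩ := Quot.exists_rep (G.ends ε.1)
      have hpq' : G.ends ε.1 = s(p, q) := hpq.symm
      have hmap : s(G.cmk S p, G.cmk S q) = s(u, m) := by
        have : Sym2.map (G.cmk S) (G.ends ε.1) = s(u, m) := hε
        rw [hpq'] at this
        rwa [Sym2.map_pair_eq] at this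
      have key : ∀ (p q : G.V), G.ends ε.1 = s(p, q) → G.cmk S p = u → G.cmk S q = m →
          ∃ w : G.Walk a b, ∀ f ∈ w.edges,
            f ∈ F ∧ (f ∈ S ∨ ∃ hf : f ∉ S,
              (⟨f, hf⟩ : (G.contract S).E) ∈ (Walk.cons ε hε w').edges) := by
        intro p q hends hp hq
        rcases lift_walk hR w' hin' q b hq hb with ⟨w2, hw2⟩
        have hreach : G.Reach S a p := Quotient.exact (ha.trans hp.symm)
        rcases walk_of_reach (hR a p hreach) with ⟨w0, hw0⟩
        refine ⟨w0.append (Walk.cons ε.1 hends w2), fun f hf => ?_⟩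
        rw [Walk.edges_append] at hf
        rcases List.mem_append.1 hf with hf | hf
        · rcases hw0 f hf with ⟨h1, h2⟩
          exact ⟨h1, Or.inl h2⟩
        · simp only [Walk.edges, List.mem_cons] at hf
          rcases hf with rfl | hf
          · exact ⟨hεF, Or.inr ⟨ε.2, List.mem_cons.2 (Or.inl rfl)⟩⟩
          · rcases hw2 f hf with ⟨h1, h2⟩
            refine ⟨h1, ?_⟩
            rcases h2 with h2 | ⟨hf', h2⟩
            · exact Or.inl h2
            · exact Or.inr ⟨hf', List.mem_cons_of_mem _ h2⟩
      rcases Sym2.eq_iff.1 hmap with ⟨hp, hq⟩ | ⟨hq, hp⟩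
      · exact key p q hpq' hp hq
      · exact key q p (hpq'.trans Sym2.eq_swap) hp hq

end FinGraph

theorem stmt10 (G : FinGraph) (S F : Set G.E) (hF : G.IsMaxForestOf (F ∩ S) S) :
    G.CycleFree F ↔ (G.contract S).CycleFree (G.cset S F) := by
  obtain ⟨hsub, hcfFS, hiff⟩ := hF
  have hR : ∀ i j : G.V, G.Reach S i j → G.Reach (F ∩ S) i j :=
    fun i j h => (hiff i j).1 h
  constructor
  · intro hCF x w' hin hpath
    cases w' with
    | nil _ => rfl
    | cons ε hε w'' =>
      rename_i m
      exfalso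
      have hnd : ((FinGraph.Walk.cons ε hε w'').edges).Nodup := hpath.2.2
      have hεnot : ε ∉ w''.edges := (List.nodup_cons.1 hnd).1
      have hεF : ε.1 ∈ F := hin ε (by simp [FinGraph.Walk.edges])
      have hin'' : w''.In (G.cset S F) := fun f hf =>
        hin f (List.mem_cons_of_mem _ hf)
      obtain ⟨⟨p, q⟩, hpq⟩ := Quot.exists_rep (G.ends ε.1)
      have hpq' : G.ends ε.1 = s(p, q) := hpq.symm
      have hε' : Sym2.map (G.cmk S) (G.ends ε.1) = s(x, m) := hε
      rw [hpq', Sym2.map_pair_eq] at hε'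
      have key : ∀ p q : G.V, G.ends ε.1 = s(p, q) →
          G.cmk S p = x → G.cmk S q = m → False := by
        intro p q hends hp hq
        rcases FinGraph.lift_walk hR w'' hin'' q p hq hp with ⟨w, hw⟩
        refine FinGraph.not_cycleFree_of_walk hεF hends w (fun f hf => ?_) hCF
        rcases hw f hf with ⟨h1, h2⟩
        refine ⟨h1, fun hfe => ?_⟩
        subst hfe
        rcases h2 with h2 | ⟨hf', h2⟩
        · exact ε.2 h2
        · have hee : (⟨ε.1, hf'⟩ : (G.contract S).E) = ε := Subtype.ext rfl
          rw [hee] at h2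
          exact hεnot h2
      rcases Sym2.eq_iff.1 hε' with ⟨hp, hq⟩ | ⟨hq, hp⟩
      · exact key p q hpq' hp hq
      · exact key q p (hpq'.trans Sym2.eq_swap) hp hq
  · intro hCF i w hin hpath
    by_contra hne
    by_cases hall : ∀ e ∈ w.edges, e ∈ S
    · have hinFS : w.In (F ∩ S) := fun f hf => ⟨hin f hf, hall f hf⟩
      exact hne (hcfFS i w hinFS hpath)
    · push_neg at hall
      obtain ⟨e, hemem, heS⟩ := hall
      obtain ⟨a, b, hstep⟩ := (FinGraph.Walk.mem_edges_iff_steps w e).1 hemem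
      have hends : G.ends e = s(a, b) := FinGraph.Walk.steps_ends w hstep
      have hcount : w.edges.count e = 1 :=
        List.count_eq_one_of_mem hpath.2.2 hemem
      obtain ⟨w1, w2, hw⟩ := FinGraph.split_of_step w hstep hcount
      have hεF : (⟨e, heS⟩ : (G.contract S).E) ∈ G.cset S F := hin e hemem
      have hends' : (G.contract S).ends ⟨e, heS⟩ = s(G.cmk S a, G.cmk S b) := by
        show Sym2.map _ (G.ends e) = _
        rw [hends]
        exact Sym2.map_pair_eq _ a b
      refine FinGraph.not_cycleFree_of_walk hεF hends'
        (G.contractWalk S (w2.append w1)) (fun f hf => ?_) hCF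
      have hf1 : f.1 ∈ (w2.append w1).edges := FinGraph.edges_contractWalk S _ f hf
      rw [FinGraph.Walk.edges_append, List.mem_append, or_comm, ← List.mem_append] at hf1
      obtain ⟨h1, h2⟩ := hw f.1 hf1
      exact ⟨hin f.1 h1, fun hfε => h2 (congrArg Subtype.val hfε)⟩
end
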